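/- arXiv:2009.10665 — 8 statements merged into one kernel-verified Lean document; each statement's English description precedes it below -/
import Mathlib

section
/- Let 0 ≤ e < 1, η = √(1−e²), and define the mean anomaly as a function of the true anomaly by ℓ_e(f) = f − 2·arctan( e·sin f / (1 + η + e·cos f) ) − e·η·sin f / (1 + e·cos f). Then ℓ_e is differentiable on ℝ with ℓ_e′(f) = η³/(1 + e·cos f)² for every f ∈ ℝ (the Keplerian differential relation η a² dℓ = r² df), ℓ_e(0) = 0, and ℓ_e(f + 2π) = ℓ_e(f) + 2π for every f ∈ ℝ. -/
open Real

private lemma brouwer_aux (e η s c : ℝ) (hη2 : η ^ 2 = 1 - e ^ 2)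
    (hs : s ^ 2 + c ^ 2 = 1)
    (hd : 0 < 1 + η + e * c) (hD : 0 < 1 + e * c) (hηpos : 0 < η) :
    η ^ 3 / (1 + e * c) ^ 2 =
      1 - 2 * (1 / (1 + (e * s / (1 + η + e * c)) ^ 2) *
        ((e * c * (1 + η + e * c) - e * s * (e * -s)) / (1 + η + e * c) ^ 2))
        - (e * η * c * (1 + e * c) - e * η * s * (e * -s)) / (1 + e * c) ^ 2 := by
  have h1η : (0:ℝ) < 1 + η := by linarith
  have key1 : 1 + (e * s / (1 + η + e * c)) ^ 2
      = 2 * (1 + η) * (1 + e * c) / (1 + η + e * c) ^ 2 := by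
    field_simp
    linear_combination e ^ 2 * hs + hη2
  have hA : 1 / (1 + (e * s / (1 + η + e * c)) ^ 2) *
      ((e * c * (1 + η + e * c) - e * s * (e * -s)) / (1 + η + e * c) ^ 2)
      = (1 + e * c - η) / (2 * (1 + e * c)) := by
    rw [key1, one_div_div, div_mul_div_comm, div_eq_div_iff (by positivity) (by positivity)]
    linear_combination (2 * (1 + e * c) * (1 + η + e * c) ^ 2 * e ^ 2) * hs
      + (2 * (1 + e * c) * (1 + η + e * c) ^ 2) * hη2
  rw [hA]
  have hB : (e * η * c * (1 + e * c) - e * η * s * (e * -s)) / (1 + e * c) ^ 2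
      = e * η * (c + e) / (1 + e * c) ^ 2 := by
    rw [div_eq_div_iff (by positivity) (by positivity)]
    linear_combination (e ^ 2 * η * (1 + e * c) ^ 2) * hs
  rw [hB]
  field_simp
  ring_nf
  linear_combination η * hη2

/-- For `0 ≤ e < 1` and `η = √(1−e²)`, the mean anomaly expressed
through the true anomaly,
`ℓ_e(f) = f − 2·arctan(e·sin f/(1+η+e·cos f)) − e·η·sin f/(1+e·cos f)`,
is differentiable on ℝ with derivative `η³/(1+e·cos f)²` (the Keplerian differential
relation `η a² dℓ = r² df`), satisfies `ℓ_e 0 = 0`, and `ℓ_e (f+2π) = ℓ_e f + 2π`. -/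
theorem brouwer_mean_anomaly_properties
    (e η : ℝ) (he0 : 0 ≤ e) (he1 : e < 1)
    (hη : η = Real.sqrt (1 - e ^ 2))
    (ℓ : ℝ → ℝ)
    (hℓ : ∀ f : ℝ, ℓ f =
      f - 2 * Real.arctan (e * Real.sin f / (1 + η + e * Real.cos f))
        - e * η * Real.sin f / (1 + e * Real.cos f)) :
    (∀ f : ℝ, HasDerivAt ℓ (η ^ 3 / (1 + e * Real.cos f) ^ 2) f) ∧
    ℓ 0 = 0 ∧
    (∀ f : ℝ, ℓ (f + 2 * Real.pi) = ℓ f + 2 * Real.pi) := by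
  have hη2 : η ^ 2 = 1 - e ^ 2 := by
    rw [hη, Real.sq_sqrt]; nlinarith
  have hηpos : 0 < η := by
    rw [hη]; exact Real.sqrt_pos.mpr (by nlinarith)
  refine ⟨?_, ?_, ?_⟩
  · intro f
    have hD : 0 < 1 + e * Real.cos f := by
      nlinarith [Real.neg_one_le_cos f, Real.cos_le_one f]
    have hd : 0 < 1 + η + e * Real.cos f := by linarith
    have h1 : HasDerivAt (fun x => e * Real.sin x) (e * Real.cos f) f :=
      (Real.hasDerivAt_sin f).const_mul e
    have h2 : HasDerivAt (fun x => 1 + η + e * Real.cos x) (e * (-Real.sin f)) f :=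
      ((Real.hasDerivAt_cos f).const_mul e).const_add (1 + η)
    have hu := h1.div h2 hd.ne'
    have hg := hu.arctan
    have h3 : HasDerivAt (fun x => e * η * Real.sin x) (e * η * Real.cos f) f :=
      (Real.hasDerivAt_sin f).const_mul (e * η)
    have h4 : HasDerivAt (fun x => 1 + e * Real.cos x) (e * (-Real.sin f)) f :=
      ((Real.hasDerivAt_cos f).const_mul e).const_add 1
    have hh := h3.div h4 hD.ne'
    have H := ((hasDerivAt_id f).sub (hg.const_mul 2)).sub hh
    have hfun : ℓ = fun x => x - 2 * Real.arctan (e * Real.sin x / (1 + η + e * Real.cos x))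
        - e * η * Real.sin x / (1 + e * Real.cos x) := funext hℓ
    rw [hfun]
    refine H.congr_deriv (Eq.symm ?_)
    simpa using brouwer_aux e η (Real.sin f) (Real.cos f) hη2
      (Real.sin_sq_add_cos_sq f) hd hD hηpos
  · rw [hℓ]; simp
  · intro f
    rw [hℓ (f + 2 * Real.pi), hℓ f, Real.sin_add_two_pi, Real.cos_add_two_pi]
    ring
end

section
/- (Kozai's averaging rule for cosine functions in elliptic motion.) Let 0 ≤ e < 1, η = √(1−e²). For every natural number m and every α ∈ ℝ, (1/(2π)) · ∫₀^{2π} cos(m·f + α) · η³/(1 + e·cos f)² df = ( −e/(1+η) )^m · (1 + m·η) · cos α. -/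
open Real

open intervalIntegral

lemma kden' {e : ℝ} (he0 : 0 ≤ e) (he1 : e < 1) (f : ℝ) : 0 < 1 + e * Real.cos f := by
  nlinarith [Real.neg_one_le_cos f, Real.cos_le_one f]

lemma kdenη {e η : ℝ} (he0 : 0 ≤ e) (he1 : e < 1) (hηp : 0 < η) (f : ℝ) :
    0 < 1 + η + e * Real.cos f := by
  nlinarith [Real.neg_one_le_cos f]

lemma kJ0' {e η : ℝ} (he0 : 0 ≤ e) (he1 : e < 1) (hηp : 0 < η) (hη2 : η ^ 2 = 1 - e ^ 2) :
    ∫ f in (0:ℝ)..(2 * π), 1 / (1 + e * Real.cos f) = 2 * π / η := by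
  have hD := kdenη he0 he1 hηp
  have hd := kden' he0 he1
  set G : ℝ → ℝ := fun f => (1/η) * (f - 2 * Real.arctan (e * Real.sin f / (1 + η + e * Real.cos f))) with hG
  have hderiv : ∀ f : ℝ, HasDerivAt G (1 / (1 + e * Real.cos f)) f := by
    intro f
    have hu : HasDerivAt (fun f => e * Real.sin f / (1 + η + e * Real.cos f))
        ((e * Real.cos f * (1 + η + e * Real.cos f) - e * Real.sin f * (e * -Real.sin f)) /
          (1 + η + e * Real.cos f) ^ 2) f := by
      exact HasDerivAt.div ((Real.hasDerivAt_sin f).const_mul e)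
        (((Real.hasDerivAt_cos f).const_mul e).const_add (1 + η)) (ne_of_gt (hD f))
    have h1 : HasDerivAt G
        ((1/η) * (1 - 2 * (1 / (1 + (e * Real.sin f / (1 + η + e * Real.cos f)) ^ 2) *
          ((e * Real.cos f * (1 + η + e * Real.cos f) - e * Real.sin f * (e * -Real.sin f)) /
            (1 + η + e * Real.cos f) ^ 2)))) f := by
      exact (((hasDerivAt_id f).sub ((hu.arctan).const_mul 2)).const_mul (1/η))
    have hs := Real.sin_sq_add_cos_sq f
    have h2 : (1 + (e * Real.sin f / (1 + η + e * Real.cos f)) ^ 2) =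
        (2 * (1 + η) * (1 + e * Real.cos f)) / (1 + η + e * Real.cos f) ^ 2 := by
      rw [div_pow, eq_div_iff (pow_ne_zero 2 (hD f).ne')]
      rw [add_mul, div_mul_cancel₀ _ (pow_ne_zero 2 (hD f).ne')]
      linear_combination e ^ 2 * hs + hη2
    rw [h2] at h1
    have heq : ((1/η) * (1 - 2 * (1 / ((2 * (1 + η) * (1 + e * Real.cos f)) / (1 + η + e * Real.cos f) ^ 2) *
          ((e * Real.cos f * (1 + η + e * Real.cos f) - e * Real.sin f * (e * -Real.sin f)) /
            (1 + η + e * Real.cos f) ^ 2)))) = 1 / (1 + e * Real.cos f) := by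
      have h3 : (2 * (1 + η) * (1 + e * Real.cos f)) ≠ 0 := by
        have := hd f; positivity
      have hD2 : ((1:ℝ) + η + e * Real.cos f) ^ 2 ≠ 0 := pow_ne_zero 2 (hD f).ne'
      have h5 : (1 + e * Real.cos f) ≠ 0 := (hd f).ne'
      have h6 : (1 + η + e * Real.cos f) ≠ 0 := (hD f).ne'
      have h4 : 1 / ((2 * (1 + η) * (1 + e * Real.cos f)) / (1 + η + e * Real.cos f) ^ 2) *
          ((e * Real.cos f * (1 + η + e * Real.cos f) - e * Real.sin f * (e * -Real.sin f)) /
            (1 + η + e * Real.cos f) ^ 2) =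
          (e * Real.cos f * (1 + η + e * Real.cos f) - e * Real.sin f * (e * -Real.sin f)) /
            (2 * (1 + η) * (1 + e * Real.cos f)) := by
        field_simp
      rw [h4, eq_div_iff (ne_of_gt (hd f))]
      field_simp
      linear_combination (-(e^2)) * hs + (-1) * hη2
    rw [heq] at h1
    exact h1
  rw [intervalIntegral.integral_eq_sub_of_hasDerivAt (fun x _ => hderiv x)
    (Continuous.intervalIntegrable
      (continuous_const.div (by continuity) (fun x => (hd x).ne')) 0 (2*π))]
  rw [hG]
  simp [Real.sin_two_pi, Real.cos_two_pi]
  ring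

lemma kZ' {e : ℝ} (he0 : 0 ≤ e) (he1 : e < 1) :
    ∫ f in (0:ℝ)..(2 * π), (Real.cos f + e) / (1 + e * Real.cos f) ^ 2 = 0 := by
  have hd := kden' he0 he1
  have hderiv : ∀ f : ℝ, HasDerivAt (fun f => Real.sin f / (1 + e * Real.cos f))
      ((Real.cos f + e) / (1 + e * Real.cos f) ^ 2) f := by
    intro f
    have h1 := HasDerivAt.div (Real.hasDerivAt_sin f)
      (((Real.hasDerivAt_cos f).const_mul e).const_add 1) (hd f).ne'
    refine h1.congr_deriv ?_
    symm
    have hs := Real.sin_sq_add_cos_sq f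
    rw [div_eq_div_iff (pow_ne_zero 2 (hd f).ne') (pow_ne_zero 2 (hd f).ne')]
    linear_combination (-(e) * (1 + e * Real.cos f)^2) * hs
  rw [intervalIntegral.integral_eq_sub_of_hasDerivAt (fun x _ => hderiv x)
    (Continuous.intervalIntegrable
      ((by continuity : Continuous fun f => Real.cos f + e).div (by continuity)
        (fun x => pow_ne_zero 2 (hd x).ne')) 0 (2*π))]
  simp [Real.sin_two_pi, Real.cos_two_pi]

lemma ksin2pi (n : ℕ) : Real.sin ((n:ℝ) * (2 * π)) = 0 := by
  have : (n:ℝ) * (2 * π) = (2 * n : ℕ) * π := by push_cast; ring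
  rw [this, Real.sin_nat_mul_pi]

lemma kcos2pi (n : ℕ) : Real.cos ((n:ℝ) * (2 * π)) = 1 := Real.cos_nat_mul_two_pi n

lemma kK' (m : ℕ) : ∫ f in (0:ℝ)..(2 * π), Real.cos (((m:ℝ)+1) * f) = 0 := by
  have hc : ((m:ℝ)+1) ≠ 0 := by positivity
  have hderiv : ∀ f : ℝ, HasDerivAt (fun f => Real.sin (((m:ℝ)+1) * f) / ((m:ℝ)+1))
      (Real.cos (((m:ℝ)+1) * f)) f := by
    intro f
    have h1 : HasDerivAt (fun f : ℝ => Real.sin (((m:ℝ)+1) * f))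
        (Real.cos (((m:ℝ)+1) * f) * ((m:ℝ)+1)) f :=
      (Real.hasDerivAt_sin _).comp f ((hasDerivAt_id f).const_mul _ |>.congr_deriv (by ring))
    have := h1.div_const ((m:ℝ)+1)
    simpa [mul_div_assoc, mul_div_cancel_right₀ _ hc] using this
  rw [intervalIntegral.integral_eq_sub_of_hasDerivAt (fun x _ => hderiv x)
    (Continuous.intervalIntegrable (by continuity) 0 (2*π))]
  have h2 : ((m:ℝ)+1) * (2*π) = ((m+1 : ℕ):ℝ) * (2*π) := by push_cast; ring
  rw [h2, ksin2pi]
  simp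

lemma kS' {e η : ℝ} (he0 : 0 ≤ e) (he1 : e < 1) (m : ℕ) :
    ∫ f in (0:ℝ)..(2 * π), Real.sin ((m:ℝ) * f) * (η ^ 3 / (1 + e * Real.cos f) ^ 2) = 0 := by
  have hd := kden' he0 he1
  have key : ∫ f in (0:ℝ)..(2 * π), Real.sin ((m:ℝ) * f) * (η ^ 3 / (1 + e * Real.cos f) ^ 2)
      = ∫ f in (0:ℝ)..(2 * π), Real.sin ((m:ℝ) * (2*π - f)) * (η ^ 3 / (1 + e * Real.cos (2*π - f)) ^ 2) := by
    rw [intervalIntegral.integral_comp_sub_left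
      (fun x => Real.sin ((m:ℝ) * x) * (η ^ 3 / (1 + e * Real.cos x) ^ 2)) (2*π)]
    norm_num
  have hneg : ∀ f : ℝ, Real.sin ((m:ℝ) * (2*π - f)) * (η ^ 3 / (1 + e * Real.cos (2*π - f)) ^ 2)
      = - (Real.sin ((m:ℝ) * f) * (η ^ 3 / (1 + e * Real.cos f) ^ 2)) := by
    intro f
    have h1 : (m:ℝ) * (2*π - f) = (m:ℝ) * (2*π) - m * f := by ring
    rw [h1, Real.sin_sub, ksin2pi, kcos2pi, Real.cos_sub, Real.cos_two_pi, Real.sin_two_pi]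
    ring_nf
  have key2 : ∫ f in (0:ℝ)..(2 * π), Real.sin ((m:ℝ) * (2*π - f)) * (η ^ 3 / (1 + e * Real.cos (2*π - f)) ^ 2)
      = - ∫ f in (0:ℝ)..(2 * π), Real.sin ((m:ℝ) * f) * (η ^ 3 / (1 + e * Real.cos f) ^ 2) := by
    simp_rw [hneg]
    exact intervalIntegral.integral_neg
  rw [key2] at key
  linarith [key]

section
variable {e η : ℝ}

-- integrability helpers
lemma kcont1 (he0 : 0 ≤ e) (he1 : e < 1) (c : ℝ) : Continuous fun f => Real.cos (c * f) / (1 + e * Real.cos f) := by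
  exact Continuous.div (by continuity) (by continuity) (fun x => (kden' he0 he1 x).ne')

lemma kcont2 (he0 : 0 ≤ e) (he1 : e < 1) (c : ℝ) : Continuous fun f => Real.cos (c * f) / (1 + e * Real.cos f) ^ 2 := by
  exact Continuous.div (by continuity) (by continuity)
    (fun x => pow_ne_zero 2 (kden' he0 he1 x).ne')

lemma kint1 (he0 : 0 ≤ e) (he1 : e < 1) (c : ℝ) : IntervalIntegrable (fun f => Real.cos (c * f) / (1 + e * Real.cos f))
    MeasureTheory.volume 0 (2*π) := (kcont1 he0 he1 c).intervalIntegrable 0 (2*π)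

lemma kint2 (he0 : 0 ≤ e) (he1 : e < 1) (c : ℝ) : IntervalIntegrable (fun f => Real.cos (c * f) / (1 + e * Real.cos f) ^ 2)
    MeasureTheory.volume 0 (2*π) := (kcont2 he0 he1 c).intervalIntegrable 0 (2*π)

-- recurrence for Jw
lemma kRecJ (he0 : 0 ≤ e) (he1 : e < 1) (m : ℕ) :
    e * ((∫ f in (0:ℝ)..(2*π), Real.cos (((m:ℝ)+2) * f) / (1 + e * Real.cos f))
       + (∫ f in (0:ℝ)..(2*π), Real.cos ((m:ℝ) * f) / (1 + e * Real.cos f)))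
    = -2 * ∫ f in (0:ℝ)..(2*π), Real.cos (((m:ℝ)+1) * f) / (1 + e * Real.cos f) := by
  have hd := kden' he0 he1
  have hp : ∀ f : ℝ, e * (Real.cos (((m:ℝ)+2) * f) / (1 + e * Real.cos f)
      + Real.cos ((m:ℝ) * f) / (1 + e * Real.cos f))
      = 2 * Real.cos (((m:ℝ)+1) * f) - 2 * (Real.cos (((m:ℝ)+1) * f) / (1 + e * Real.cos f)) := by
    intro f
    have h1 : ((m:ℝ)+2) * f = ((m:ℝ)+1) * f + f := by ring
    have h2 : (m:ℝ) * f = ((m:ℝ)+1) * f - f := by ring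
    have h3 : (1 + e * Real.cos f) ≠ 0 := (hd f).ne'
    rw [h1, h2, Real.cos_add, Real.cos_sub]
    field_simp
    ring
  calc e * ((∫ f in (0:ℝ)..(2*π), Real.cos (((m:ℝ)+2) * f) / (1 + e * Real.cos f))
       + (∫ f in (0:ℝ)..(2*π), Real.cos ((m:ℝ) * f) / (1 + e * Real.cos f)))
      = ∫ f in (0:ℝ)..(2*π), e * (Real.cos (((m:ℝ)+2) * f) / (1 + e * Real.cos f)
        + Real.cos ((m:ℝ) * f) / (1 + e * Real.cos f)) := by
        rw [intervalIntegral.integral_const_mul,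
          intervalIntegral.integral_add (kint1 he0 he1 _) (kint1 he0 he1 _)]
    _ = ∫ f in (0:ℝ)..(2*π), (2 * Real.cos (((m:ℝ)+1) * f)
        - 2 * (Real.cos (((m:ℝ)+1) * f) / (1 + e * Real.cos f))) :=
        intervalIntegral.integral_congr (fun f _ => hp f)
    _ = 2 * (∫ f in (0:ℝ)..(2*π), Real.cos (((m:ℝ)+1) * f))
        - 2 * ∫ f in (0:ℝ)..(2*π), Real.cos (((m:ℝ)+1) * f) / (1 + e * Real.cos f) := by
        rw [intervalIntegral.integral_sub (((by continuity : Continuous fun f => 2 * Real.cos (((m:ℝ)+1) * f))).intervalIntegrable 0 (2*π))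
          (((kcont1 he0 he1 ((m:ℝ)+1)).intervalIntegrable 0 (2*π)).const_mul 2),
          intervalIntegral.integral_const_mul, intervalIntegral.integral_const_mul]
    _ = -2 * ∫ f in (0:ℝ)..(2*π), Real.cos (((m:ℝ)+1) * f) / (1 + e * Real.cos f) := by
        rw [kK' m]; ring

-- recurrence for Iw
lemma kRecI (he0 : 0 ≤ e) (he1 : e < 1) (m : ℕ) :
    e * ((∫ f in (0:ℝ)..(2*π), Real.cos (((m:ℝ)+2) * f) / (1 + e * Real.cos f) ^ 2)
       + (∫ f in (0:ℝ)..(2*π), Real.cos ((m:ℝ) * f) / (1 + e * Real.cos f) ^ 2))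
    = 2 * (∫ f in (0:ℝ)..(2*π), Real.cos (((m:ℝ)+1) * f) / (1 + e * Real.cos f))
      - 2 * ∫ f in (0:ℝ)..(2*π), Real.cos (((m:ℝ)+1) * f) / (1 + e * Real.cos f) ^ 2 := by
  have hd := kden' he0 he1
  have hp : ∀ f : ℝ, e * (Real.cos (((m:ℝ)+2) * f) / (1 + e * Real.cos f) ^ 2
      + Real.cos ((m:ℝ) * f) / (1 + e * Real.cos f) ^ 2)
      = 2 * (Real.cos (((m:ℝ)+1) * f) / (1 + e * Real.cos f))
        - 2 * (Real.cos (((m:ℝ)+1) * f) / (1 + e * Real.cos f) ^ 2) := by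
    intro f
    have h1 : ((m:ℝ)+2) * f = ((m:ℝ)+1) * f + f := by ring
    have h2 : (m:ℝ) * f = ((m:ℝ)+1) * f - f := by ring
    have h3 : (1 + e * Real.cos f) ≠ 0 := (hd f).ne'
    rw [h1, h2, Real.cos_add, Real.cos_sub]
    field_simp
    ring
  calc e * ((∫ f in (0:ℝ)..(2*π), Real.cos (((m:ℝ)+2) * f) / (1 + e * Real.cos f) ^ 2)
       + (∫ f in (0:ℝ)..(2*π), Real.cos ((m:ℝ) * f) / (1 + e * Real.cos f) ^ 2))
      = ∫ f in (0:ℝ)..(2*π), e * (Real.cos (((m:ℝ)+2) * f) / (1 + e * Real.cos f) ^ 2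
        + Real.cos ((m:ℝ) * f) / (1 + e * Real.cos f) ^ 2) := by
        rw [intervalIntegral.integral_const_mul,
          intervalIntegral.integral_add (kint2 he0 he1 _) (kint2 he0 he1 _)]
    _ = ∫ f in (0:ℝ)..(2*π), (2 * (Real.cos (((m:ℝ)+1) * f) / (1 + e * Real.cos f))
        - 2 * (Real.cos (((m:ℝ)+1) * f) / (1 + e * Real.cos f) ^ 2)) :=
        intervalIntegral.integral_congr (fun f _ => hp f)
    _ = 2 * (∫ f in (0:ℝ)..(2*π), Real.cos (((m:ℝ)+1) * f) / (1 + e * Real.cos f))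
        - 2 * ∫ f in (0:ℝ)..(2*π), Real.cos (((m:ℝ)+1) * f) / (1 + e * Real.cos f) ^ 2 := by
        rw [intervalIntegral.integral_sub
          (((kcont1 he0 he1 ((m:ℝ)+1)).intervalIntegrable 0 (2*π)).const_mul 2)
          (((kcont2 he0 he1 ((m:ℝ)+1)).intervalIntegrable 0 (2*π)).const_mul 2),
          intervalIntegral.integral_const_mul, intervalIntegral.integral_const_mul]
end

section
variable {e η : ℝ}

lemma kJ0mul (he0 : 0 ≤ e) (he1 : e < 1) (hηp : 0 < η) (hη2 : η ^ 2 = 1 - e ^ 2) :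
    η * ∫ f in (0:ℝ)..(2 * π), 1 / (1 + e * Real.cos f) = 2 * π := by
  rw [kJ0' he0 he1 hηp hη2]; field_simp

lemma kI0mul (he0 : 0 ≤ e) (he1 : e < 1) (hηp : 0 < η) (hη2 : η ^ 2 = 1 - e ^ 2) :
    η^3 * ∫ f in (0:ℝ)..(2 * π), 1 / (1 + e * Real.cos f) ^ 2 = 2 * π := by
  have hd := kden' he0 he1
  have hpt : ∀ f : ℝ, (1:ℝ) / (1 + e * Real.cos f) ^ 2
      = (1/η^2) * (1 / (1 + e * Real.cos f)) - (e/η^2) * ((Real.cos f + e) / (1 + e * Real.cos f) ^ 2) := by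
    intro f
    have h3 : (1 + e * Real.cos f) ≠ 0 := (hd f).ne'
    have h4 : η ≠ 0 := hηp.ne'
    field_simp
    linear_combination hη2
  have hi1 : IntervalIntegrable (fun f => (1/η^2) * (1 / (1 + e * Real.cos f)))
      MeasureTheory.volume 0 (2*π) :=
    ((continuous_const.mul (continuous_const.div (by continuity) (fun x => (hd x).ne'))).intervalIntegrable 0 (2*π))
  have hi2 : IntervalIntegrable (fun f => (e/η^2) * ((Real.cos f + e) / (1 + e * Real.cos f) ^ 2))
      MeasureTheory.volume 0 (2*π) :=
    ((continuous_const.mul ((Continuous.div (by continuity) (by continuity)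
      (fun x => pow_ne_zero 2 (hd x).ne')))).intervalIntegrable 0 (2*π))
  have key : (∫ f in (0:ℝ)..(2*π), (1:ℝ) / (1 + e * Real.cos f) ^ 2)
      = (1/η^2) * (∫ f in (0:ℝ)..(2*π), 1 / (1 + e * Real.cos f))
        - (e/η^2) * ∫ f in (0:ℝ)..(2*π), (Real.cos f + e) / (1 + e * Real.cos f) ^ 2 := by
    rw [← intervalIntegral.integral_const_mul, ← intervalIntegral.integral_const_mul,
      ← intervalIntegral.integral_sub hi1 hi2]
    exact intervalIntegral.integral_congr (fun f _ => hpt f)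
  rw [key, kZ' he0 he1, kJ0' he0 he1 hηp hη2]
  field_simp
  ring
end

section
variable {e η : ℝ}

lemma kint0 (he0 : 0 ≤ e) (he1 : e < 1) :
    IntervalIntegrable (fun f => (1:ℝ) / (1 + e * Real.cos f)) MeasureTheory.volume 0 (2*π) :=
  (continuous_const.div (by continuity) (fun x => (kden' he0 he1 x).ne')).intervalIntegrable 0 (2*π)

lemma kint02 (he0 : 0 ≤ e) (he1 : e < 1) :
    IntervalIntegrable (fun f => (1:ℝ) / (1 + e * Real.cos f) ^ 2) MeasureTheory.volume 0 (2*π) :=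
  (continuous_const.div (by continuity) (fun x => pow_ne_zero 2 (kden' he0 he1 x).ne')).intervalIntegrable 0 (2*π)

lemma kJ1e (he0 : 0 ≤ e) (he1 : e < 1) :
    e * ∫ f in (0:ℝ)..(2*π), Real.cos f / (1 + e * Real.cos f)
      = 2 * π - ∫ f in (0:ℝ)..(2*π), 1 / (1 + e * Real.cos f) := by
  have hd := kden' he0 he1
  have hp : ∀ f : ℝ, e * (Real.cos f / (1 + e * Real.cos f))
      = 1 - 1 / (1 + e * Real.cos f) := by
    intro f
    have h3 : (1 + e * Real.cos f) ≠ 0 := (hd f).ne'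
    field_simp
    ring
  have hcont : Continuous fun f : ℝ => Real.cos f / (1 + e * Real.cos f) :=
    Continuous.div (by continuity) (by continuity) (fun x => (hd x).ne')
  calc e * ∫ f in (0:ℝ)..(2*π), Real.cos f / (1 + e * Real.cos f)
      = ∫ f in (0:ℝ)..(2*π), e * (Real.cos f / (1 + e * Real.cos f)) :=
        (intervalIntegral.integral_const_mul _ _).symm
    _ = ∫ f in (0:ℝ)..(2*π), (1 - 1 / (1 + e * Real.cos f)) :=
        intervalIntegral.integral_congr (fun f _ => hp f)
    _ = 2 * π - ∫ f in (0:ℝ)..(2*π), 1 / (1 + e * Real.cos f) := by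
        rw [intervalIntegral.integral_sub (intervalIntegrable_const) (kint0 he0 he1)]
        simp

lemma kI1e (he0 : 0 ≤ e) (he1 : e < 1) :
    e * ∫ f in (0:ℝ)..(2*π), Real.cos f / (1 + e * Real.cos f) ^ 2
      = (∫ f in (0:ℝ)..(2*π), 1 / (1 + e * Real.cos f))
        - ∫ f in (0:ℝ)..(2*π), 1 / (1 + e * Real.cos f) ^ 2 := by
  have hd := kden' he0 he1
  have hp : ∀ f : ℝ, e * (Real.cos f / (1 + e * Real.cos f) ^ 2)
      = 1 / (1 + e * Real.cos f) - 1 / (1 + e * Real.cos f) ^ 2 := by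
    intro f
    have h3 : (1 + e * Real.cos f) ≠ 0 := (hd f).ne'
    field_simp
    ring
  calc e * ∫ f in (0:ℝ)..(2*π), Real.cos f / (1 + e * Real.cos f) ^ 2
      = ∫ f in (0:ℝ)..(2*π), e * (Real.cos f / (1 + e * Real.cos f) ^ 2) :=
        (intervalIntegral.integral_const_mul _ _).symm
    _ = ∫ f in (0:ℝ)..(2*π), (1 / (1 + e * Real.cos f) - 1 / (1 + e * Real.cos f) ^ 2) :=
        intervalIntegral.integral_congr (fun f _ => hp f)
    _ = _ := intervalIntegral.integral_sub (kint0 he0 he1) (kint02 he0 he1)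

lemma kClosed (hep : 0 < e) (he1 : e < 1) (hηp : 0 < η) (hη2 : η ^ 2 = 1 - e ^ 2) :
    ∀ m : ℕ,
      (η * (1+η)^m * ∫ f in (0:ℝ)..(2*π), Real.cos ((m:ℝ) * f) / (1 + e * Real.cos f)
        = 2 * π * (-e)^m)
    ∧ (η^3 * (1+η)^m * ∫ f in (0:ℝ)..(2*π), Real.cos ((m:ℝ) * f) / (1 + e * Real.cos f) ^ 2
        = 2 * π * (-e)^m * (1 + (m:ℝ) * η)) := by
  have he0 : 0 ≤ e := hep.le
  have hJ0 := kJ0mul he0 he1 hηp hη2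
  have hI0 := kI0mul he0 he1 hηp hη2
  set P : ℕ → Prop := fun m =>
      (η * (1+η)^m * ∫ f in (0:ℝ)..(2*π), Real.cos ((m:ℝ) * f) / (1 + e * Real.cos f)
        = 2 * π * (-e)^m)
    ∧ (η^3 * (1+η)^m * ∫ f in (0:ℝ)..(2*π), Real.cos ((m:ℝ) * f) / (1 + e * Real.cos f) ^ 2
        = 2 * π * (-e)^m * (1 + (m:ℝ) * η)) with hP
  suffices h : ∀ m, P m ∧ P (m+1) by exact fun m => (h m).1
  have hbase0 : P 0 := by
    rw [hP]
    constructor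
    · simp only [Nat.cast_zero, zero_mul, Real.cos_zero, pow_zero, one_mul, mul_one]
      exact hJ0
    · simp only [Nat.cast_zero, zero_mul, Real.cos_zero, pow_zero, one_mul, mul_one, add_zero]
      exact hI0
  have hbase1 : P 1 := by
    rw [hP]
    constructor
    · simp only [Nat.cast_one, one_mul, pow_one]
      apply mul_left_cancel₀ hep.ne'
      linear_combination (η*(1+η)) * kJ1e he0 he1 + (-(1+η)) * hJ0 + (2*π) * hη2
    · simp only [Nat.cast_one, one_mul, pow_one]
      apply mul_left_cancel₀ hep.ne'
      linear_combination (η^3*(1+η)) * kI1e he0 he1 + (η^2*(1+η)) * hJ0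
        + (-(1+η)) * hI0 + (2*π*(1+η)) * hη2
  intro m
  induction m with
  | zero => exact ⟨hbase0, hbase1⟩
  | succ n ih =>
    refine ⟨ih.2, ?_, ?_⟩
    · -- J part for n+2
      have hm := ih.1.1
      have hm1 := ih.2.1
      have hrec := kRecJ he0 he1 n
      push_cast at hm hm1 ⊢
      rw [show ((n:ℝ)+1+1) = ((n:ℝ)+2) from by ring]
      rw [pow_succ (1+η) (n+1), pow_succ (1+η) n, pow_succ (-e) (n+1), pow_succ (-e) n] at *
      apply mul_left_cancel₀ hep.ne'
      linear_combination (η*(1+η)^n*(1+η)^2) * hrec + (-(e)*(1+η)^2) * hm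
        + (-2*(1+η)) * hm1 + (-2*π*(-e)^n*e) * hη2
    · -- I part for n+2
      have hmI := ih.1.2
      have hm1I := ih.2.2
      have hm1 := ih.2.1
      have hrec := kRecI he0 he1 n
      push_cast at hmI hm1I hm1 ⊢
      rw [show ((n:ℝ)+1+1) = ((n:ℝ)+2) from by ring]
      rw [pow_succ (1+η) (n+1), pow_succ (1+η) n, pow_succ (-e) (n+1), pow_succ (-e) n] at *
      apply mul_left_cancel₀ hep.ne'
      linear_combination (η^3*(1+η)^n*(1+η)^2) * hrec + (2*η^2*(1+η)) * hm1
        + (-2*(1+η)) * hm1I + (-(e)*(1+η)^2) * hmI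
        + (-2*π*(-e)^n*e*(1+((n:ℝ)+2)*η)) * hη2
end

/-- (Kozai's averaging rule for cosine functions in elliptic motion.)
For `0 ≤ e < 1`, `η = √(1−e²)`, every natural number `m` and every `α ∈ ℝ`,
`(1/(2π)) ∫₀^{2π} cos(m f + α) · η³/(1+e cos f)² df = (−e/(1+η))^m (1+m η) cos α`. -/
theorem kozai_average_cosine
    (e η : ℝ) (he0 : 0 ≤ e) (he1 : e < 1)
    (hη : η = Real.sqrt (1 - e ^ 2)) :
    ∀ (m : ℕ) (α : ℝ),
      (1 / (2 * Real.pi)) *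
        ∫ f in (0 : ℝ)..(2 * Real.pi),
          Real.cos ((m : ℝ) * f + α) * (η ^ 3 / (1 + e * Real.cos f) ^ 2)
      = (-e / (1 + η)) ^ m * (1 + (m : ℝ) * η) * Real.cos α := by
  have h1e : (0:ℝ) < 1 - e ^ 2 := by nlinarith
  have hη2 : η ^ 2 = 1 - e ^ 2 := by rw [hη, Real.sq_sqrt h1e.le]
  have hηp : 0 < η := by rw [hη]; exact Real.sqrt_pos.mpr h1e
  have hd := kden' he0 he1
  intro m α
  -- split the integral
  have hsplit : (∫ f in (0:ℝ)..(2 * π),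
        Real.cos ((m:ℝ) * f + α) * (η ^ 3 / (1 + e * Real.cos f) ^ 2))
      = Real.cos α * (η^3 * ∫ f in (0:ℝ)..(2*π), Real.cos ((m:ℝ) * f) / (1 + e * Real.cos f) ^ 2)
        - Real.sin α * ∫ f in (0:ℝ)..(2*π), Real.sin ((m:ℝ) * f) * (η ^ 3 / (1 + e * Real.cos f) ^ 2) := by
    have hp : ∀ f : ℝ, Real.cos ((m:ℝ) * f + α) * (η ^ 3 / (1 + e * Real.cos f) ^ 2)
        = Real.cos α * η^3 * (Real.cos ((m:ℝ) * f) / (1 + e * Real.cos f) ^ 2)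
          - Real.sin α * (Real.sin ((m:ℝ) * f) * (η ^ 3 / (1 + e * Real.cos f) ^ 2)) := by
      intro f
      rw [Real.cos_add]
      have h3 : ((1:ℝ) + e * Real.cos f) ^ 2 ≠ 0 := pow_ne_zero 2 (hd f).ne'
      field_simp
    have hI1 : IntervalIntegrable
        (fun f => Real.cos α * η^3 * (Real.cos ((m:ℝ) * f) / (1 + e * Real.cos f) ^ 2))
        MeasureTheory.volume 0 (2*π) :=
      (continuous_const.mul (kcont2 he0 he1 (m:ℝ))).intervalIntegrable 0 (2*π)
    have hI2 : IntervalIntegrable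
        (fun f => Real.sin α * (Real.sin ((m:ℝ) * f) * (η ^ 3 / (1 + e * Real.cos f) ^ 2)))
        MeasureTheory.volume 0 (2*π) := by
      apply Continuous.intervalIntegrable
      apply continuous_const.mul
      exact (by continuity : Continuous fun f : ℝ => Real.sin ((m:ℝ)*f)).mul
        (continuous_const.div (by continuity) (fun x => pow_ne_zero 2 (hd x).ne'))
    rw [intervalIntegral.integral_congr (fun f _ => hp f),
      intervalIntegral.integral_sub hI1 hI2,
      intervalIntegral.integral_const_mul, intervalIntegral.integral_const_mul]
    ring
  rw [hsplit, kS' he0 he1 m]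
  rcases eq_or_lt_of_le he0 with hez | hep
  · -- e = 0
    subst hez
    have hη1 : η = 1 := by nlinarith [hηp]
    subst hη1
    simp only [zero_mul, add_zero, mul_one, one_pow, one_mul, mul_zero, sub_zero, neg_zero,
      zero_div]
    match m with
    | 0 =>
      simp only [Nat.cast_zero, zero_mul, Real.cos_zero, mul_zero, sub_zero, pow_zero,
        one_mul, mul_one, add_zero, one_pow, div_one]
      rw [intervalIntegral.integral_const]
      have hπ : (2:ℝ) * π ≠ 0 := by positivity
      field_simp
      simp [mul_comm]
    | (n+1) =>
      have hk := kK' n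
      push_cast at hk ⊢
      simp only [zero_mul, add_zero, one_pow, div_one, mul_zero, sub_zero]
      rw [hk]
      simp
  · -- e > 0
    have h := (kClosed hep he1 hηp hη2 m).2
    have hpow : ((1:ℝ)+η)^m ≠ 0 := by positivity
    rw [div_pow]
    have hπ : (2:ℝ) * π ≠ 0 := by positivity
    field_simp
    linear_combination (Real.cos α) * h
end

section
/- (First-order average of the main-problem Hamiltonian.) Let μ > 0, R > 0, p > 0, 0 ≤ e < 1, g ∈ ℝ, s ∈ ℝ, and set η = √(1−e²), a = p/η², r(f) = p/(1 + e·cos f). Then (1/(2π)) · ∫₀^{2π} [ −(μ/(2·r(f)))·(R²/r(f)²)·( 1 − (3/2)s² + (3/2)s²·cos(2f + 2g) ) ] · η³/(1 + e·cos f)² df = −(μ/(2a))·(R²/p²)·η·( 1 − (3/2)s² ). -/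
open Real

/-- (First-order average of the main-problem Hamiltonian.)
With `μ, R, p > 0`, `0 ≤ e < 1`, `η = √(1−e²)`, `a = p/η²`, `r f = p/(1+e cos f)`,
the mean-anomaly average of
`−(μ/(2r))(R²/r²)(1 − (3/2)s² + (3/2)s² cos(2f+2g))`
equals `−(μ/(2a))(R²/p²) η (1 − (3/2)s²)`. -/
theorem main_problem_first_order_average
    (μ R p e η a : ℝ) (g s : ℝ)
    (hμ : 0 < μ) (hR : 0 < R) (hp : 0 < p)
    (he0 : 0 ≤ e) (he1 : e < 1)
    (hη : η = Real.sqrt (1 - e ^ 2))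
    (ha : a = p / η ^ 2)
    (r : ℝ → ℝ)
    (hr : ∀ f : ℝ, r f = p / (1 + e * Real.cos f)) :
    (1 / (2 * Real.pi)) *
      ∫ f in (0 : ℝ)..(2 * Real.pi),
        (-(μ / (2 * r f)) * (R ^ 2 / (r f) ^ 2) *
          (1 - 3 / 2 * s ^ 2 + 3 / 2 * s ^ 2 * Real.cos (2 * f + 2 * g))) *
        (η ^ 3 / (1 + e * Real.cos f) ^ 2)
    = -(μ / (2 * a)) * (R ^ 2 / p ^ 2) * η * (1 - 3 / 2 * s ^ 2) := by
  have hη0 : 0 < η := by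
    rw [hη]; apply Real.sqrt_pos.2; nlinarith
  obtain ⟨C, hC⟩ : ∃ C : ℝ, C = -(μ * R ^ 2 * η ^ 3 / (2 * p ^ 3)) := ⟨_, rfl⟩
  set A : ℝ := 1 - 3 / 2 * s ^ 2 with hA
  set B : ℝ := 3 / 2 * s ^ 2 with hB
  have hp' : p ≠ 0 := hp.ne'
  have key : ∀ u X : ℝ, u ≠ 0 →
      -(μ / (2 * (p / u))) * (R ^ 2 / (p / u) ^ 2) * X * (η ^ 3 / u ^ 2) = C * (u * X) := by
    intro u X hu
    rw [hC]
    field_simp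
  have hpos : ∀ f : ℝ, 0 < 1 + e * Real.cos f := by
    intro f
    have h1 := Real.neg_one_le_cos f
    have h2 := Real.cos_le_one f
    nlinarith
  -- simplified integrand
  set G : ℝ → ℝ := fun f => C * (A + A * e * Real.cos f + B * Real.cos (2 * f + 2 * g)
      + B * e * (Real.cos (3 * f + 2 * g) + Real.cos (f + 2 * g)) / 2) with hG
  have hfun : ∀ f : ℝ,
      (-(μ / (2 * r f)) * (R ^ 2 / (r f) ^ 2) *
          (1 - 3 / 2 * s ^ 2 + 3 / 2 * s ^ 2 * Real.cos (2 * f + 2 * g))) *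
        (η ^ 3 / (1 + e * Real.cos f) ^ 2) = G f := by
    intro f
    have h := hpos f
    have hprod : Real.cos (3 * f + 2 * g) + Real.cos (f + 2 * g)
        = 2 * (Real.cos f * Real.cos (2 * f + 2 * g)) := by
      rw [show (3 * f + 2 * g) = (2 * f + 2 * g) + f by ring,
        show (f + 2 * g) = (2 * f + 2 * g) - f by ring, Real.cos_add, Real.cos_sub]
      ring
    rw [hr]
    simp only [hG, hprod]
    rw [key (1 + e * Real.cos f) (A + B * Real.cos (2 * f + 2 * g)) h.ne']
    ring
  rw [intervalIntegral.integral_congr (fun f _ => hfun f)]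
  -- antiderivative
  set F : ℝ → ℝ := fun f => C * (A * f + A * e * Real.sin f + B * Real.sin (2 * f + 2 * g) / 2
      + B * e * (Real.sin (3 * f + 2 * g) / 3 + Real.sin (f + 2 * g)) / 2) with hF
  have hderiv : ∀ f ∈ Set.uIcc (0 : ℝ) (2 * Real.pi), HasDerivAt F (G f) f := by
    intro f _
    have h1 : HasDerivAt (fun x : ℝ => x) 1 f := hasDerivAt_id f
    have h2 : HasDerivAt Real.sin (Real.cos f) f := Real.hasDerivAt_sin f
    have h3 : HasDerivAt (fun x : ℝ => Real.sin (2 * x + 2 * g))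
        (Real.cos (2 * f + 2 * g) * (2 * 1)) f :=
      ((h1.const_mul 2).add_const (2 * g)).sin
    have h4 : HasDerivAt (fun x : ℝ => Real.sin (3 * x + 2 * g))
        (Real.cos (3 * f + 2 * g) * (3 * 1)) f :=
      ((h1.const_mul 3).add_const (2 * g)).sin
    have h5 : HasDerivAt (fun x : ℝ => Real.sin (x + 2 * g))
        (Real.cos (f + 2 * g) * 1) f := (h1.add_const (2 * g)).sin
    have := ((((h1.const_mul A).add (h2.const_mul (A * e))).add
        ((h3.div_const 2).const_mul B)).add
        (((h4.div_const 3).add h5).div_const 2 |>.const_mul (B * e))).const_mul C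
    convert this using 1
    · ext x; simp only [hF]
    · ext x; simp only [hF, Pi.add_apply]
    · ext x; simp only [hF, Pi.add_apply]; ring
    · show C * _ = _; ring
  have hcont : Continuous G := by
    simp only [hG]; fun_prop
  rw [intervalIntegral.integral_eq_sub_of_hasDerivAt hderiv
    (hcont.intervalIntegrable _ _)]
  have s1 : Real.sin (2 * (2 * Real.pi) + 2 * g) = Real.sin (2 * g) := by
    rw [show 2 * (2 * Real.pi) + 2 * g = 2 * g + 2 * Real.pi + 2 * Real.pi by ring,
      Real.sin_add_two_pi, Real.sin_add_two_pi]
  have s2 : Real.sin (3 * (2 * Real.pi) + 2 * g) = Real.sin (2 * g) := by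
    rw [show 3 * (2 * Real.pi) + 2 * g = 2 * g + 2 * Real.pi + 2 * Real.pi + 2 * Real.pi by ring,
      Real.sin_add_two_pi, Real.sin_add_two_pi, Real.sin_add_two_pi]
  have s3 : Real.sin (2 * Real.pi + 2 * g) = Real.sin (2 * g) := by
    rw [show 2 * Real.pi + 2 * g = 2 * g + 2 * Real.pi by ring, Real.sin_add_two_pi]
  have hFval : F (2 * Real.pi) - F 0 = C * A * (2 * Real.pi) := by
    simp only [hF, s1, s2, s3, Real.sin_two_pi, mul_zero, zero_add, Real.sin_zero]
    ring
  rw [hFval]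
  have hπ : (2 : ℝ) * Real.pi ≠ 0 := by positivity
  rw [ha]
  have hη2 : η ^ 2 ≠ 0 := by positivity
  rw [hC]
  field_simp
end

section
/- (Closed-form first-order generating function solves the homological equation.) Let μ > 0, R > 0, p > 0, 0 ≤ e < 1, g ∈ ℝ, s ∈ ℝ; set η = √(1−e²), a = p/η², n = √(μ/a³), G = √(μ·p), and let ℓ_e(f) = f − 2·arctan( e·sin f / (1 + η + e·cos f) ) − e·η·sin f / (1 + e·cos f). Define W(f) = −G·(R²/p²)·(1/2)·[ (1 − (3/2)s²)·( (f − ℓ_e(f)) + e·sin f ) + (3/4)s²·( e·sin(f + 2g) + sin(2f + 2g) + (e/3)·sin(3f + 2g) ) ]. Then for every f ∈ ℝ: n·W′(f) = ( H̃(f) − K ) · η³/(1 + e·cos f)², where H̃(f) = −(μ/(2a))·(R²·(1 + e·cos f)²/p²)·(1/η²)·[ (1 − (3/2)s²)·(1 + e·cos f) + (3/4)s²·( e·cos(f + 2g) + 2·cos(2f + 2g) + e·cos(3f + 2g) ) ] and K = −(μ/(2a))·(R²/p²)·η·(1 − (3/2)s²). -/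
open Real

set_option maxHeartbeats 2000000 in
/-- (Closed-form first-order generating function solves the
homological equation.) With `ℓ_e` the mean anomaly as a function of the true anomaly,
`n = √(μ/a³)`, `G = √(μ p)`, the generating function
`W(f) = −G (R²/p²) (1/2) [ (1−(3/2)s²)((f−ℓ_e f) + e sin f)
        + (3/4)s² ( e sin(f+2g) + sin(2f+2g) + (e/3) sin(3f+2g) ) ]`
satisfies `n W′(f) = (H̃(f) − K) · η³/(1+e cos f)²` for every `f`. -/
theorem first_order_homological_equation
    (μ R p e η a n G : ℝ) (g s : ℝ)
    (hμ : 0 < μ) (hR : 0 < R) (hp : 0 < p)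
    (he0 : 0 ≤ e) (he1 : e < 1)
    (hη : η = Real.sqrt (1 - e ^ 2))
    (ha : a = p / η ^ 2)
    (hn : n = Real.sqrt (μ / a ^ 3))
    (hG : G = Real.sqrt (μ * p))
    (ℓ : ℝ → ℝ)
    (hℓ : ∀ f : ℝ, ℓ f =
      f - 2 * Real.arctan (e * Real.sin f / (1 + η + e * Real.cos f))
        - e * η * Real.sin f / (1 + e * Real.cos f))
    (W : ℝ → ℝ)
    (hW : ∀ f : ℝ, W f =
      -G * (R ^ 2 / p ^ 2) * (1 / 2) *
        ((1 - 3 / 2 * s ^ 2) * ((f - ℓ f) + e * Real.sin f) +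
          3 / 4 * s ^ 2 *
            (e * Real.sin (f + 2 * g) + Real.sin (2 * f + 2 * g) +
              e / 3 * Real.sin (3 * f + 2 * g))))
    (Htilde : ℝ → ℝ)
    (hHt : ∀ f : ℝ, Htilde f =
      -(μ / (2 * a)) * (R ^ 2 * (1 + e * Real.cos f) ^ 2 / p ^ 2) * (1 / η ^ 2) *
        ((1 - 3 / 2 * s ^ 2) * (1 + e * Real.cos f) +
          3 / 4 * s ^ 2 *
            (e * Real.cos (f + 2 * g) + 2 * Real.cos (2 * f + 2 * g) +
              e * Real.cos (3 * f + 2 * g))))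
    (K : ℝ)
    (hK : K = -(μ / (2 * a)) * (R ^ 2 / p ^ 2) * η * (1 - 3 / 2 * s ^ 2)) :
    ∀ f : ℝ,
      HasDerivAt W ((Htilde f - K) * (η ^ 3 / (1 + e * Real.cos f) ^ 2) / n) f := by
  have he2 : e ^ 2 < 1 := by nlinarith
  have hηpos : 0 < η := by rw [hη]; exact Real.sqrt_pos.mpr (by linarith)
  have hη2 : η ^ 2 = 1 - e ^ 2 := by
    rw [hη, Real.sq_sqrt (by linarith)]
  have hapos : 0 < a := by rw [ha]; positivity
  have hnpos : 0 < n := by rw [hn]; exact Real.sqrt_pos.mpr (by positivity)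
  have hnG : n * G = μ * η ^ 3 / p := by
    rw [hn, hG, ← Real.sqrt_mul (by positivity)]
    rw [show μ / a ^ 3 * (μ * p) = (μ * η ^ 3 / p) ^ 2 by
      rw [ha]; field_simp]
    exact Real.sqrt_sq (by positivity)
  have hG' : G = μ * η ^ 3 / p / n := by
    field_simp at hnG ⊢; linarith [hnG]
  intro f
  have hq : 0 < 1 + e * Real.cos f := by nlinarith [Real.neg_one_le_cos f, Real.cos_le_one f]
  have hd : 0 < 1 + η + e * Real.cos f := by linarith
  -- rewrite W explicitly
  have hWfun : W = fun x => -G * (R ^ 2 / p ^ 2) * (1 / 2) *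
      ((1 - 3 / 2 * s ^ 2) *
        ((2 * Real.arctan (e * Real.sin x / (1 + η + e * Real.cos x))
          + e * η * Real.sin x / (1 + e * Real.cos x)) + e * Real.sin x) +
        3 / 4 * s ^ 2 *
          (e * Real.sin (x + 2 * g) + Real.sin (2 * x + 2 * g) +
            e / 3 * Real.sin (3 * x + 2 * g))) := by
    funext x
    rw [hW, hℓ]; ring
  -- derivative building blocks
  have hu : HasDerivAt (fun x => e * Real.sin x / (1 + η + e * Real.cos x))
      ((e * Real.cos f * (1 + η + e * Real.cos f) - e * Real.sin f * (e * -Real.sin f))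
        / (1 + η + e * Real.cos f) ^ 2) f :=
    HasDerivAt.div ((Real.hasDerivAt_sin f).const_mul e)
      (((Real.hasDerivAt_cos f).const_mul e).const_add (1 + η)) hd.ne'
  have harc : HasDerivAt
      (fun x => Real.arctan (e * Real.sin x / (1 + η + e * Real.cos x)))
      (1 / (1 + (e * Real.sin f / (1 + η + e * Real.cos f)) ^ 2) *
        ((e * Real.cos f * (1 + η + e * Real.cos f) - e * Real.sin f * (e * -Real.sin f))
          / (1 + η + e * Real.cos f) ^ 2)) f :=
    (Real.hasDerivAt_arctan _).comp f hu
  have hrat : HasDerivAt (fun x => e * η * Real.sin x / (1 + e * Real.cos x))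
      ((e * η * Real.cos f * (1 + e * Real.cos f) - e * η * Real.sin f * (e * -Real.sin f))
        / (1 + e * Real.cos f) ^ 2) f :=
    HasDerivAt.div ((Real.hasDerivAt_sin f).const_mul (e * η))
      (((Real.hasDerivAt_cos f).const_mul e).const_add 1) hq.ne'
  have h1 : HasDerivAt
      (fun x => (2 * Real.arctan (e * Real.sin x / (1 + η + e * Real.cos x))
          + e * η * Real.sin x / (1 + e * Real.cos x)) + e * Real.sin x)
      ((2 * (1 / (1 + (e * Real.sin f / (1 + η + e * Real.cos f)) ^ 2) *
        ((e * Real.cos f * (1 + η + e * Real.cos f) - e * Real.sin f * (e * -Real.sin f))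
          / (1 + η + e * Real.cos f) ^ 2))
        + (e * η * Real.cos f * (1 + e * Real.cos f) - e * η * Real.sin f * (e * -Real.sin f))
          / (1 + e * Real.cos f) ^ 2) + e * Real.cos f) f :=
    ((harc.const_mul 2).add hrat).add ((Real.hasDerivAt_sin f).const_mul e)
  have hl1 : HasDerivAt (fun x : ℝ => x + 2 * g) 1 f := by
    simpa using (hasDerivAt_id f).add_const (2 * g)
  have hl2 : HasDerivAt (fun x : ℝ => 2 * x + 2 * g) 2 f := by
    simpa using (((hasDerivAt_id f).const_mul 2).add_const (2 * g))
  have hl3 : HasDerivAt (fun x : ℝ => 3 * x + 2 * g) 3 f := by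
    simpa using (((hasDerivAt_id f).const_mul 3).add_const (2 * g))
  have h2 : HasDerivAt
      (fun x => e * Real.sin (x + 2 * g) + Real.sin (2 * x + 2 * g)
        + e / 3 * Real.sin (3 * x + 2 * g))
      ((e * (Real.cos (f + 2 * g) * 1) + Real.cos (2 * f + 2 * g) * 2)
        + e / 3 * (Real.cos (3 * f + 2 * g) * 3)) f :=
    ((((Real.hasDerivAt_sin (f + 2 * g)).comp f hl1).const_mul e).add
      ((Real.hasDerivAt_sin (2 * f + 2 * g)).comp f hl2)).add
      (((Real.hasDerivAt_sin (3 * f + 2 * g)).comp f hl3).const_mul (e / 3))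
  have htot := ((h1.const_mul (1 - 3 / 2 * s ^ 2)).add
      (h2.const_mul (3 / 4 * s ^ 2))).const_mul (-G * (R ^ 2 / p ^ 2) * (1 / 2))
  rw [hWfun]
  refine htot.congr_deriv ?_
  -- now a pure equality of real numbers
  have hsc := Real.sin_sq_add_cos_sq f
  have hh2 : (1 + η + e * Real.cos f) ^ 2 + (e * Real.sin f) ^ 2
      = 2 * (1 + η) * (1 + e * Real.cos f) := by nlinarith [hsc]
  have h1η : 0 < 1 + η := by linarith
  have huu : 1 + (e * Real.sin f / (1 + η + e * Real.cos f)) ^ 2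
      = 2 * (1 + η) * (1 + e * Real.cos f) / (1 + η + e * Real.cos f) ^ 2 := by
    field_simp
    linarith [hh2]
  have hkey : 2 * (1 / (1 + (e * Real.sin f / (1 + η + e * Real.cos f)) ^ 2) *
        ((e * Real.cos f * (1 + η + e * Real.cos f) - e * Real.sin f * (e * -Real.sin f))
          / (1 + η + e * Real.cos f) ^ 2))
      + (e * η * Real.cos f * (1 + e * Real.cos f) - e * η * Real.sin f * (e * -Real.sin f))
          / (1 + e * Real.cos f) ^ 2
      = 1 - η ^ 3 / (1 + e * Real.cos f) ^ 2 := by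
    rw [huu]
    field_simp
    linear_combination e ^ 2 * ((1 + e * Real.cos f) + η * (1 + η)) * hsc + (e * Real.cos f + 1 + η + η ^ 2) * hη2
  rw [hkey, hHt, hK, ha, hG']
  field_simp
  ring
end

section
/- (Closed-form average of equation-of-center terms.) Let 0 ≤ e < 1, η = √(1−e²), and ℓ_e(f) = f − 2·arctan( e·sin f / (1 + η + e·cos f) ) − e·η·sin f / (1 + e·cos f). Then for every integer m ≥ 1 and every α ∈ ℝ: (m/(2π)) · ∫₀^{2π} ( f − ℓ_e(f) )·sin(m·f + α) df = −( −e/(1+η) )^m · (1 + m·η) · cos α. -/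
open Real


lemma eoc_eta_sq {e η : ℝ} (he1 : e < 1) (he0 : 0 ≤ e) (hη : η = Real.sqrt (1 - e^2)) :
    η^2 = 1 - e^2 := by
  rw [hη, Real.sq_sqrt]; nlinarith

lemma eoc_eta_pos {e η : ℝ} (he1 : e < 1) (he0 : 0 ≤ e) (hη : η = Real.sqrt (1 - e^2)) :
    0 < η := by
  rw [hη]; exact Real.sqrt_pos.2 (by nlinarith)

lemma eoc_den_pos {e : ℝ} (he0 : 0 ≤ e) (he1 : e < 1) (x : ℝ) : 0 < 1 + e * Real.cos x := by
  nlinarith [Real.neg_one_le_cos x, Real.cos_le_one x]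

lemma eoc_hasDerivAt_atan {e η : ℝ} (he0 : 0 ≤ e) (he1 : e < 1)
    (hη : η = Real.sqrt (1 - e^2)) (x : ℝ) :
    HasDerivAt (fun f => 2 * Real.arctan (e * Real.sin f / (1 + η + e * Real.cos f)))
      (1 - η / (1 + e * Real.cos x)) x := by
  have hη2 := eoc_eta_sq he1 he0 hη
  have hηpos := eoc_eta_pos he1 he0 hη
  have hden := eoc_den_pos he0 he1 x
  have hv : (0:ℝ) < 1 + η + e * Real.cos x := by nlinarith [Real.neg_one_le_cos x]
  have hu : HasDerivAt (fun f => e * Real.sin f) (e * Real.cos x) x :=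
    (Real.hasDerivAt_sin x).const_mul e
  have hv' : HasDerivAt (fun f => 1 + η + e * Real.cos f) (e * -Real.sin x) x :=
    (((Real.hasDerivAt_cos x)).const_mul e).const_add (1 + η)
  have hq := (hu.div hv' hv.ne').arctan.const_mul 2
  refine hq.congr_deriv ?_
  symm
  simp only [Pi.div_apply]
  have hs : Real.sin x ^ 2 = 1 - Real.cos x ^ 2 := by
    nlinarith [Real.sin_sq_add_cos_sq x]
  have h2 : 1 + (e * Real.sin x / (1 + η + e * Real.cos x))^2
      = 2*(1+η)*(1 + e * Real.cos x) / (1 + η + e * Real.cos x)^2 := by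
    field_simp
    linear_combination e^2*hs + hη2
  have h3 : e * Real.cos x * (1 + η + e * Real.cos x) - e * Real.sin x * (e * -Real.sin x)
      = (1+η)*(e * Real.cos x + 1 - η) := by
    linear_combination e^2*hs + hη2
  rw [h2, h3]
  have h1η : (0:ℝ) < 1 + η := by linarith
  field_simp
  ring

lemma eoc_hasDerivAt_phi {e η : ℝ} (he0 : 0 ≤ e) (he1 : e < 1)
    (hη : η = Real.sqrt (1 - e^2)) (x : ℝ) :
    HasDerivAt (fun f => 2 * Real.arctan (e * Real.sin f / (1 + η + e * Real.cos f))
        + e * η * Real.sin f / (1 + e * Real.cos f))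
      (1 - η^3 / (1 + e * Real.cos x)^2) x := by
  have hη2 := eoc_eta_sq he1 he0 hη
  have hηpos := eoc_eta_pos he1 he0 hη
  have hden := eoc_den_pos he0 he1 x
  have hu : HasDerivAt (fun f => e * η * Real.sin f) (e * η * Real.cos x) x :=
    (Real.hasDerivAt_sin x).const_mul (e*η)
  have hv : HasDerivAt (fun f => 1 + e * Real.cos f) (e * -Real.sin x) x :=
    ((Real.hasDerivAt_cos x).const_mul e).const_add 1
  have h2 := (eoc_hasDerivAt_atan he0 he1 hη x).add (hu.div hv hden.ne')
  refine h2.congr_deriv ?_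
  symm
  have hs : Real.sin x ^ 2 = 1 - Real.cos x ^ 2 := by
    nlinarith [Real.sin_sq_add_cos_sq x]
  have key : e * η * Real.cos x * (1 + e * Real.cos x) - e * η * Real.sin x * (e * -Real.sin x)
      = η * (1 + e * Real.cos x) - η^3 := by
    linear_combination η*e^2*hs + η*hη2
  rw [key]
  field_simp
  ring

lemma eoc_hasDerivAt_E {e η : ℝ} (he0 : 0 ≤ e) (he1 : e < 1)
    (hη : η = Real.sqrt (1 - e^2)) (x : ℝ) :
    HasDerivAt (fun f => f - 2 * Real.arctan (e * Real.sin f / (1 + η + e * Real.cos f)))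
      (η / (1 + e * Real.cos x)) x := by
  have h := (hasDerivAt_id x).sub (eoc_hasDerivAt_atan he0 he1 hη x)
  refine h.congr_deriv ?_
  symm
  ring

lemma eoc_hasDerivAt_ell {e η : ℝ} (he0 : 0 ≤ e) (he1 : e < 1)
    (hη : η = Real.sqrt (1 - e^2)) (x : ℝ) :
    HasDerivAt (fun f => f - (2 * Real.arctan (e * Real.sin f / (1 + η + e * Real.cos f))
        + e * η * Real.sin f / (1 + e * Real.cos f)))
      (η^3 / (1 + e * Real.cos x)^2) x := by
  have h := (hasDerivAt_id x).sub (eoc_hasDerivAt_phi he0 he1 hη x)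
  refine h.congr_deriv ?_
  symm
  ring


lemma eoc_integral_cos_kf (k : ℕ) (hk : 1 ≤ k) :
    ∫ f in (0:ℝ)..(2*π), Real.cos ((k:ℝ)*f) = 0 := by
  have hk0 : (k:ℝ) ≠ 0 := Nat.cast_ne_zero.2 (by omega)
  rw [intervalIntegral.integral_comp_mul_left Real.cos hk0]
  simp only [mul_zero, integral_cos, Real.sin_zero, sub_zero]
  have : (k:ℝ) * (2*π) = 0 + (k:ℝ) * (2*π) := by ring
  rw [this, Real.sin_add_nat_mul_two_pi]
  simp

lemma eoc_integral_sin_kf (k : ℕ) :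
    ∫ f in (0:ℝ)..(2*π), Real.sin ((k:ℝ)*f) = 0 := by
  rcases Nat.eq_zero_or_pos k with h | h
  · simp [h]
  have hk0 : (k:ℝ) ≠ 0 := Nat.cast_ne_zero.2 (by omega)
  rw [intervalIntegral.integral_comp_mul_left Real.sin hk0]
  simp only [mul_zero, integral_sin, Real.cos_zero]
  have : (k:ℝ) * (2*π) = 0 + (k:ℝ) * (2*π) := by ring
  rw [this, Real.cos_add_nat_mul_two_pi]
  simp


lemma eoc_cont1 {e : ℝ} (he0 : 0 ≤ e) (he1 : e < 1) {g : ℝ → ℝ} (hg : Continuous g) :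
    Continuous (fun f => g f / (1 + e * Real.cos f)) :=
  hg.div (by continuity) fun x => (eoc_den_pos he0 he1 x).ne'

lemma eoc_cont2 {e : ℝ} (he0 : 0 ≤ e) (he1 : e < 1) {g : ℝ → ℝ} (hg : Continuous g) :
    Continuous (fun f => g f / (1 + e * Real.cos f)^2) :=
  hg.div (by continuity) fun x => pow_ne_zero 2 (eoc_den_pos he0 he1 x).ne'

lemma eoc_J0 {e η : ℝ} (he0 : 0 ≤ e) (he1 : e < 1) (hη : η = Real.sqrt (1 - e^2)) :
    ∫ f in (0:ℝ)..(2*π), 1 / (1 + e * Real.cos f) = 2*π/η := by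
  have hηpos := eoc_eta_pos he1 he0 hη
  have hderiv : ∀ x ∈ Set.uIcc (0:ℝ) (2*π),
      HasDerivAt (fun f => (f - 2 * Real.arctan (e * Real.sin f / (1 + η + e * Real.cos f)))/η)
        (1 / (1 + e * Real.cos x)) x := by
    intro x _
    have h := (eoc_hasDerivAt_E he0 he1 hη x).div_const η
    refine h.congr_deriv ?_
    symm
    rw [div_div, div_eq_div_iff (eoc_den_pos he0 he1 x).ne' (mul_ne_zero (eoc_den_pos he0 he1 x).ne' hηpos.ne')]
    ring
  rw [intervalIntegral.integral_eq_sub_of_hasDerivAt hderiv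
    ((eoc_cont1 he0 he1 continuous_const).intervalIntegrable _ _)]
  simp [Real.sin_two_pi]

lemma eoc_I0 {e η : ℝ} (he0 : 0 ≤ e) (he1 : e < 1) (hη : η = Real.sqrt (1 - e^2)) :
    ∫ f in (0:ℝ)..(2*π), 1 / (1 + e * Real.cos f)^2 = 2*π/η^3 := by
  have hηpos := eoc_eta_pos he1 he0 hη
  have hderiv : ∀ x ∈ Set.uIcc (0:ℝ) (2*π),
      HasDerivAt (fun f => (f - (2 * Real.arctan (e * Real.sin f / (1 + η + e * Real.cos f))
          + e * η * Real.sin f / (1 + e * Real.cos f)))/η^3)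
        (1 / (1 + e * Real.cos x)^2) x := by
    intro x _
    have h := (eoc_hasDerivAt_ell he0 he1 hη x).div_const (η^3)
    refine h.congr_deriv ?_
    symm
    rw [div_div, div_eq_div_iff (pow_ne_zero 2 (eoc_den_pos he0 he1 x).ne') (mul_ne_zero (pow_ne_zero 2 (eoc_den_pos he0 he1 x).ne') (pow_ne_zero 3 hηpos.ne'))]
    ring
  rw [intervalIntegral.integral_eq_sub_of_hasDerivAt hderiv
    ((eoc_cont2 he0 he1 continuous_const).intervalIntegrable _ _)]
  simp [Real.sin_two_pi]

lemma eoc_T1 {e : ℝ} (he0 : 0 < e) (he1 : e < 1) :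
    ∫ f in (0:ℝ)..(2*π), Real.sin f / (1 + e * Real.cos f) = 0 := by
  have hderiv : ∀ x ∈ Set.uIcc (0:ℝ) (2*π),
      HasDerivAt (fun f => -(1/e) * Real.log (1 + e * Real.cos f))
        (Real.sin x / (1 + e * Real.cos x)) x := by
    intro x _
    have hv : HasDerivAt (fun f => 1 + e * Real.cos f) (e * -Real.sin x) x :=
      ((Real.hasDerivAt_cos x).const_mul e).const_add 1
    have h := (hv.log (eoc_den_pos he0.le he1 x).ne').const_mul (-(1/e))
    refine h.congr_deriv ?_
    symm
    field_simp
  rw [intervalIntegral.integral_eq_sub_of_hasDerivAt hderiv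
    ((eoc_cont1 he0.le he1 Real.continuous_sin).intervalIntegrable _ _)]
  simp [Real.cos_two_pi]

lemma eoc_S1 {e : ℝ} (he0 : 0 < e) (he1 : e < 1) :
    ∫ f in (0:ℝ)..(2*π), Real.sin f / (1 + e * Real.cos f)^2 = 0 := by
  have hderiv : ∀ x ∈ Set.uIcc (0:ℝ) (2*π),
      HasDerivAt (fun f => (1/e) * (1 + e * Real.cos f)⁻¹)
        (Real.sin x / (1 + e * Real.cos x)^2) x := by
    intro x _
    have hv : HasDerivAt (fun f => 1 + e * Real.cos f) (e * -Real.sin x) x :=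
      ((Real.hasDerivAt_cos x).const_mul e).const_add 1
    have h := (hv.inv (eoc_den_pos he0.le he1 x).ne').const_mul (1/e)
    refine h.congr_deriv ?_
    symm
    have hd := eoc_den_pos he0.le he1 x
    field_simp
  rw [intervalIntegral.integral_eq_sub_of_hasDerivAt hderiv
    ((eoc_cont2 he0.le he1 Real.continuous_sin).intervalIntegrable _ _)]
  simp [Real.cos_two_pi]


lemma eoc_J1 {e η : ℝ} (he0 : 0 < e) (he1 : e < 1) (hη : η = Real.sqrt (1 - e^2)) :
    ∫ f in (0:ℝ)..(2*π), Real.cos f / (1 + e * Real.cos f) = 2*π*(-e/(1+η))/η := by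
  have hη2 := eoc_eta_sq he1 he0.le hη
  have hηpos := eoc_eta_pos he1 he0.le hη
  have hpt : Set.EqOn (fun x => Real.cos x / (1 + e * Real.cos x))
      (fun x => 1/e - (1/e) * (1 / (1 + e * Real.cos x))) (Set.uIcc 0 (2*π)) := by
    intro x _
    have hd := eoc_den_pos he0.le he1 x
    have hd' : 1 + Real.cos x * e ≠ 0 := by rw [mul_comm]; exact hd.ne'
    field_simp
    ring
  rw [intervalIntegral.integral_congr hpt,
    intervalIntegral.integral_sub intervalIntegrable_const
      ((continuous_const.fun_mul (eoc_cont1 he0.le he1 continuous_const)).intervalIntegrable _ _),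
    intervalIntegral.integral_const_mul, eoc_J0 he0.le he1 hη,
    intervalIntegral.integral_const, smul_eq_mul]
  have h1η : (0:ℝ) < 1 + η := by linarith
  field_simp
  linear_combination 2*π*hη2

lemma eoc_I1 {e η : ℝ} (he0 : 0 < e) (he1 : e < 1) (hη : η = Real.sqrt (1 - e^2)) :
    ∫ f in (0:ℝ)..(2*π), Real.cos f / (1 + e * Real.cos f)^2
      = 2*π*(-e/(1+η))*(1+η)/η^3 := by
  have hη2 := eoc_eta_sq he1 he0.le hη
  have hηpos := eoc_eta_pos he1 he0.le hη
  have hpt : Set.EqOn (fun x => Real.cos x / (1 + e * Real.cos x)^2)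
      (fun x => (1/e) * (1 / (1 + e * Real.cos x)) - (1/e) * (1 / (1 + e * Real.cos x)^2))
      (Set.uIcc 0 (2*π)) := by
    intro x _
    have hd := eoc_den_pos he0.le he1 x
    field_simp
    ring
  rw [intervalIntegral.integral_congr hpt,
    intervalIntegral.integral_sub
      ((continuous_const.fun_mul (eoc_cont1 he0.le he1 continuous_const)).intervalIntegrable _ _)
      ((continuous_const.fun_mul (eoc_cont2 he0.le he1 continuous_const)).intervalIntegrable _ _),
    intervalIntegral.integral_const_mul, intervalIntegral.integral_const_mul,
    eoc_J0 he0.le he1 hη, eoc_I0 he0.le he1 hη]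
  have h1η : (0:ℝ) < 1 + η := by linarith
  field_simp
  linear_combination hη2

lemma eoc_fourier {e η : ℝ} (he0 : 0 < e) (he1 : e < 1) (hη : η = Real.sqrt (1 - e^2)) :
    ∀ n : ℕ,
      ((∫ f in (0:ℝ)..(2*π), Real.cos ((n:ℝ)*f) / (1 + e * Real.cos f))
          = 2*π*(-e/(1+η))^n/η
      ∧ (∫ f in (0:ℝ)..(2*π), Real.sin ((n:ℝ)*f) / (1 + e * Real.cos f)) = 0)
      ∧ ((∫ f in (0:ℝ)..(2*π), Real.cos ((n:ℝ)*f) / (1 + e * Real.cos f)^2)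
          = 2*π*(-e/(1+η))^n*(1+(n:ℝ)*η)/η^3
      ∧ (∫ f in (0:ℝ)..(2*π), Real.sin ((n:ℝ)*f) / (1 + e * Real.cos f)^2) = 0) := by
  have hη2 := eoc_eta_sq he1 he0.le hη
  have hηpos := eoc_eta_pos he1 he0.le hη
  have h1η : (0:ℝ) < 1 + η := by linarith
  set P : ℕ → Prop := fun n =>
      ((∫ f in (0:ℝ)..(2*π), Real.cos ((n:ℝ)*f) / (1 + e * Real.cos f))
          = 2*π*(-e/(1+η))^n/η
      ∧ (∫ f in (0:ℝ)..(2*π), Real.sin ((n:ℝ)*f) / (1 + e * Real.cos f)) = 0)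
      ∧ ((∫ f in (0:ℝ)..(2*π), Real.cos ((n:ℝ)*f) / (1 + e * Real.cos f)^2)
          = 2*π*(-e/(1+η))^n*(1+(n:ℝ)*η)/η^3
      ∧ (∫ f in (0:ℝ)..(2*π), Real.sin ((n:ℝ)*f) / (1 + e * Real.cos f)^2) = 0) with hP
  suffices H : ∀ n, P n ∧ P (n+1) by exact fun n => (H n).1
  have hb2 : (-e/(1+η))^2 = -(2/e)*(-e/(1+η)) - 1 := by
    field_simp
    linear_combination hη2
  have hb3 : (-e/(1+η))^2*(1+η) = 1-η := by
    field_simp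
    linear_combination hη2
  have base0 : P 0 := by
    rw [hP]
    refine ⟨⟨?_, by simp⟩, ?_, by simp⟩
    · simpa using eoc_J0 he0.le he1 hη
    · simpa using eoc_I0 he0.le he1 hη
  have base1 : P 1 := by
    rw [hP]
    refine ⟨⟨?_, ?_⟩, ?_, ?_⟩
    · simpa using eoc_J1 he0 he1 hη
    · simpa using eoc_T1 he0 he1
    · simpa using eoc_I1 he0 he1 hη
    · simpa using eoc_S1 he0 he1
  have step : ∀ n : ℕ, P n → P (n+1) → P (n+2) := by
    intro n hn hn1
    rw [hP] at hn hn1 ⊢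
    push_cast at hn hn1 ⊢
    obtain ⟨⟨hJn, hTn⟩, hIn, hSn⟩ := hn
    obtain ⟨⟨hJn1, hTn1⟩, hIn1, hSn1⟩ := hn1
    have trigc : ∀ x : ℝ, Real.cos (((n:ℝ)+2)*x)
        = 2*Real.cos x*Real.cos (((n:ℝ)+1)*x) - Real.cos ((n:ℝ)*x) := by
      intro x
      have e1 : ((n:ℝ)+2)*x = ((n:ℝ)+1)*x + x := by ring
      have e2 : (n:ℝ)*x = ((n:ℝ)+1)*x - x := by ring
      rw [e1, e2, Real.cos_add, Real.cos_sub]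
      ring
    have trigs : ∀ x : ℝ, Real.sin (((n:ℝ)+2)*x)
        = 2*Real.cos x*Real.sin (((n:ℝ)+1)*x) - Real.sin ((n:ℝ)*x) := by
      intro x
      have e1 : ((n:ℝ)+2)*x = ((n:ℝ)+1)*x + x := by ring
      have e2 : (n:ℝ)*x = ((n:ℝ)+1)*x - x := by ring
      rw [e1, e2, Real.sin_add, Real.sin_sub]
      ring
    have hcc : ∀ c : ℝ, Continuous (fun x : ℝ => Real.cos (c*x)) := by
      intro c; exact Real.continuous_cos.comp (continuous_const.mul continuous_id)
    have hcs : ∀ c : ℝ, Continuous (fun x : ℝ => Real.sin (c*x)) := by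
      intro c; exact Real.continuous_sin.comp (continuous_const.mul continuous_id)
    have hcz : ∫ x in (0:ℝ)..2*π, Real.cos (((n:ℝ)+1)*x) = 0 := by
      have := eoc_integral_cos_kf (n+1) (by omega); push_cast at this; exact this
    have hsz : ∫ x in (0:ℝ)..2*π, Real.sin (((n:ℝ)+1)*x) = 0 := by
      have := eoc_integral_sin_kf (n+1); push_cast at this; exact this
    refine ⟨⟨?_, ?_⟩, ?_, ?_⟩
    · -- J_{n+2}
      have hpt : Set.EqOn (fun x => Real.cos (((n:ℝ)+2)*x) / (1 + e * Real.cos x))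
          (fun x => (2/e) * Real.cos (((n:ℝ)+1)*x)
            - (2/e) * (Real.cos (((n:ℝ)+1)*x) / (1 + e * Real.cos x))
            - Real.cos ((n:ℝ)*x) / (1 + e * Real.cos x)) (Set.uIcc 0 (2*π)) := by
        intro x _
        have hd := eoc_den_pos he0.le he1 x
        have hd' : 1 + Real.cos x * e ≠ 0 := by rw [mul_comm]; exact hd.ne'
        simp only
        rw [trigc x]
        field_simp
        ring
      rw [intervalIntegral.integral_congr hpt,
        intervalIntegral.integral_sub
          (((continuous_const.fun_mul (hcc _)).fun_sub
            (continuous_const.fun_mul (eoc_cont1 he0.le he1 (hcc _)))).intervalIntegrable _ _)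
          ((eoc_cont1 he0.le he1 (hcc _)).intervalIntegrable _ _),
        intervalIntegral.integral_sub
          ((continuous_const.fun_mul (hcc _)).intervalIntegrable _ _)
          ((continuous_const.fun_mul (eoc_cont1 he0.le he1 (hcc _))).intervalIntegrable _ _),
        intervalIntegral.integral_const_mul, intervalIntegral.integral_const_mul,
        hcz, hJn1, hJn]
      simp only [pow_succ]
      generalize (-e/(1+η))^n = X
      field_simp
      linear_combination (-π*X*e)*hη2
    · -- T_{n+2}
      have hpt : Set.EqOn (fun x => Real.sin (((n:ℝ)+2)*x) / (1 + e * Real.cos x))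
          (fun x => (2/e) * Real.sin (((n:ℝ)+1)*x)
            - (2/e) * (Real.sin (((n:ℝ)+1)*x) / (1 + e * Real.cos x))
            - Real.sin ((n:ℝ)*x) / (1 + e * Real.cos x)) (Set.uIcc 0 (2*π)) := by
        intro x _
        have hd := eoc_den_pos he0.le he1 x
        have hd' : 1 + Real.cos x * e ≠ 0 := by rw [mul_comm]; exact hd.ne'
        simp only
        rw [trigs x]
        field_simp
        ring
      rw [intervalIntegral.integral_congr hpt,
        intervalIntegral.integral_sub
          (((continuous_const.fun_mul (hcs _)).fun_sub
            (continuous_const.fun_mul (eoc_cont1 he0.le he1 (hcs _)))).intervalIntegrable _ _)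
          ((eoc_cont1 he0.le he1 (hcs _)).intervalIntegrable _ _),
        intervalIntegral.integral_sub
          ((continuous_const.fun_mul (hcs _)).intervalIntegrable _ _)
          ((continuous_const.fun_mul (eoc_cont1 he0.le he1 (hcs _))).intervalIntegrable _ _),
        intervalIntegral.integral_const_mul, intervalIntegral.integral_const_mul,
        hsz, hTn1, hTn]
      ring
    · -- I_{n+2}
      have hpt : Set.EqOn (fun x => Real.cos (((n:ℝ)+2)*x) / (1 + e * Real.cos x)^2)
          (fun x => (2/e) * (Real.cos (((n:ℝ)+1)*x) / (1 + e * Real.cos x))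
            - (2/e) * (Real.cos (((n:ℝ)+1)*x) / (1 + e * Real.cos x)^2)
            - Real.cos ((n:ℝ)*x) / (1 + e * Real.cos x)^2) (Set.uIcc 0 (2*π)) := by
        intro x _
        have hd := eoc_den_pos he0.le he1 x
        simp only
        rw [trigc x]
        field_simp
        ring
      rw [intervalIntegral.integral_congr hpt,
        intervalIntegral.integral_sub
          (((continuous_const.fun_mul (eoc_cont1 he0.le he1 (hcc _))).fun_sub
            (continuous_const.fun_mul (eoc_cont2 he0.le he1 (hcc _)))).intervalIntegrable _ _)
          ((eoc_cont2 he0.le he1 (hcc _)).intervalIntegrable _ _),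
        intervalIntegral.integral_sub
          ((continuous_const.fun_mul (eoc_cont1 he0.le he1 (hcc _))).intervalIntegrable _ _)
          ((continuous_const.fun_mul (eoc_cont2 he0.le he1 (hcc _))).intervalIntegrable _ _),
        intervalIntegral.integral_const_mul, intervalIntegral.integral_const_mul,
        hJn1, hIn1, hIn]
      simp only [pow_succ]
      generalize (-e/(1+η))^n = X
      field_simp
      linear_combination (-X*(1+(2+(n:ℝ))*η))*hη2
    · -- S_{n+2}
      have hpt : Set.EqOn (fun x => Real.sin (((n:ℝ)+2)*x) / (1 + e * Real.cos x)^2)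
          (fun x => (2/e) * (Real.sin (((n:ℝ)+1)*x) / (1 + e * Real.cos x))
            - (2/e) * (Real.sin (((n:ℝ)+1)*x) / (1 + e * Real.cos x)^2)
            - Real.sin ((n:ℝ)*x) / (1 + e * Real.cos x)^2) (Set.uIcc 0 (2*π)) := by
        intro x _
        have hd := eoc_den_pos he0.le he1 x
        simp only
        rw [trigs x]
        field_simp
        ring
      rw [intervalIntegral.integral_congr hpt,
        intervalIntegral.integral_sub
          (((continuous_const.fun_mul (eoc_cont1 he0.le he1 (hcs _))).fun_sub
            (continuous_const.fun_mul (eoc_cont2 he0.le he1 (hcs _)))).intervalIntegrable _ _)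
          ((eoc_cont2 he0.le he1 (hcs _)).intervalIntegrable _ _),
        intervalIntegral.integral_sub
          ((continuous_const.fun_mul (eoc_cont1 he0.le he1 (hcs _))).intervalIntegrable _ _)
          ((continuous_const.fun_mul (eoc_cont2 he0.le he1 (hcs _))).intervalIntegrable _ _),
        intervalIntegral.integral_const_mul, intervalIntegral.integral_const_mul,
        hTn1, hSn1, hSn]
      ring
  intro n
  induction n with
  | zero => exact ⟨base0, base1⟩
  | succ n ih => exact ⟨ih.2, step n ih.1 ih.2⟩


/-- (Closed-form average of equation-of-center terms.)
For every integer `m ≥ 1` and every `α ∈ ℝ`: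
`(m/(2π)) ∫₀^{2π} (f − ℓ_e f) sin(m f + α) df = −(−e/(1+η))^m (1+m η) cos α`. -/
theorem equation_of_center_average
    (e η : ℝ) (he0 : 0 ≤ e) (he1 : e < 1)
    (hη : η = Real.sqrt (1 - e ^ 2))
    (ℓ : ℝ → ℝ)
    (hℓ : ∀ f : ℝ, ℓ f =
      f - 2 * Real.arctan (e * Real.sin f / (1 + η + e * Real.cos f))
        - e * η * Real.sin f / (1 + e * Real.cos f)) :
    ∀ (m : ℤ), 1 ≤ m → ∀ (α : ℝ),
      ((m : ℝ) / (2 * Real.pi)) *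
        ∫ f in (0 : ℝ)..(2 * Real.pi), (f - ℓ f) * Real.sin ((m : ℝ) * f + α)
      = -((-e / (1 + η)) ^ m) * (1 + (m : ℝ) * η) * Real.cos α := by
  have hη2 := eoc_eta_sq he1 he0 hη
  have hηpos := eoc_eta_pos he1 he0 hη
  intro m hm α
  obtain ⟨n, rfl⟩ : ∃ n : ℕ, m = (n : ℤ) :=
    ⟨m.toNat, (Int.toNat_of_nonneg (by linarith)).symm⟩
  have hn1 : 1 ≤ n := by exact_mod_cast hm
  have hnR : (0:ℝ) < (n:ℝ) := by exact_mod_cast hn1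
  rw [zpow_natCast]
  push_cast
  rcases eq_or_lt_of_le he0 with he | he0'
  · -- e = 0
    have hz : Set.EqOn (fun f => (f - ℓ f) * Real.sin ((n:ℝ) * f + α)) (fun _ => 0)
        (Set.uIcc 0 (2*π)) := by
      intro x _
      simp only [hℓ x, ← he]
      simp
    rw [intervalIntegral.integral_congr hz, intervalIntegral.integral_zero, ← he]
    simp [zero_pow (by omega : n ≠ 0)]
  · -- e > 0
    set φ : ℝ → ℝ := fun f => 2 * Real.arctan (e * Real.sin f / (1 + η + e * Real.cos f))
        + e * η * Real.sin f / (1 + e * Real.cos f) with hφ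
    have hφ0 : φ 0 = 0 := by simp [hφ]
    have hφ2π : φ (2*π) = 0 := by simp [hφ, Real.sin_two_pi]
    have hφcont : Continuous φ := by
      apply Continuous.add
      · apply Continuous.mul continuous_const
        apply Real.continuous_arctan.comp
        apply Continuous.div
          (continuous_const.mul Real.continuous_sin)
          (continuous_const.add (continuous_const.mul Real.continuous_cos))
        intro x
        show 1 + η + e * Real.cos x ≠ 0
        have := eoc_den_pos he0 he1 x
        nlinarith [Real.neg_one_le_cos x]
      · exact eoc_cont1 he0 he1 (continuous_const.mul Real.continuous_sin)
    have haff : Continuous (fun x : ℝ => (n:ℝ)*x + α) :=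
      (continuous_const.mul continuous_id).add continuous_const
    have hcontcosan : Continuous (fun x : ℝ => Real.cos ((n:ℝ)*x + α)) :=
      Real.continuous_cos.comp haff
    have hcontsinan : Continuous (fun x : ℝ => Real.sin ((n:ℝ)*x + α)) :=
      Real.continuous_sin.comp haff
    -- FTC for G = -(φ x * cos(nx+α))/n
    have hFTC : ∫ x in (0:ℝ)..(2*π),
        (φ x * Real.sin ((n:ℝ)*x + α)
          - (1 - η^3/(1 + e*Real.cos x)^2) * Real.cos ((n:ℝ)*x + α) / (n:ℝ)) = 0 := by
      have hd : ∀ x ∈ Set.uIcc (0:ℝ) (2*π),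
          HasDerivAt (fun x => -(φ x * Real.cos ((n:ℝ)*x + α)) / (n:ℝ))
            (φ x * Real.sin ((n:ℝ)*x + α)
              - (1 - η^3/(1 + e*Real.cos x)^2) * Real.cos ((n:ℝ)*x + α) / (n:ℝ)) x := by
        intro x _
        have hφd : HasDerivAt φ (1 - η^3/(1 + e*Real.cos x)^2) x :=
          eoc_hasDerivAt_phi he0 he1 hη x
        have hcd : HasDerivAt (fun x : ℝ => Real.cos ((n:ℝ)*x + α))
            (-Real.sin ((n:ℝ)*x + α) * (n:ℝ)) x := by
          have h1 : HasDerivAt (fun x : ℝ => (n:ℝ)*x + α) ((n:ℝ)) x := by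
            simpa using ((hasDerivAt_id x).const_mul (n:ℝ)).add_const α
          exact (Real.hasDerivAt_cos ((n:ℝ)*x + α)).comp x h1
        have h := ((hφd.mul hcd).neg).div_const (n:ℝ)
        refine h.congr_deriv ?_
        symm
        field_simp
        ring
      rw [intervalIntegral.integral_eq_sub_of_hasDerivAt hd
        (((hφcont.mul hcontsinan).sub
          (((continuous_const.sub (eoc_cont2 he0 he1 continuous_const)).mul
            hcontcosan).div_const (n:ℝ))).intervalIntegrable _ _)]
      simp [hφ0, hφ2π]
    -- split the FTC integral
    have hInt1 : IntervalIntegrable (fun x => φ x * Real.sin ((n:ℝ)*x + α))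
        MeasureTheory.volume 0 (2*π) := (hφcont.mul hcontsinan).intervalIntegrable _ _
    have hInt2 : IntervalIntegrable
        (fun x => (1 - η^3/(1 + e*Real.cos x)^2) * Real.cos ((n:ℝ)*x + α) / (n:ℝ))
        MeasureTheory.volume 0 (2*π) :=
      (((continuous_const.sub (eoc_cont2 he0 he1 continuous_const)).mul
        hcontcosan).div_const (n:ℝ)).intervalIntegrable _ _
    rw [intervalIntegral.integral_sub hInt1 hInt2] at hFTC
    -- compute the cos-integral
    have hC : ∫ x in (0:ℝ)..(2*π),
        (1 - η^3/(1 + e*Real.cos x)^2) * Real.cos ((n:ℝ)*x + α)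
        = -2*π*(-e/(1+η))^n*(1+(n:ℝ)*η)*Real.cos α := by
      have hpt : Set.EqOn
          (fun x => (1 - η^3/(1 + e*Real.cos x)^2) * Real.cos ((n:ℝ)*x + α))
          (fun x => (Real.cos α) * Real.cos ((n:ℝ)*x) - (Real.sin α) * Real.sin ((n:ℝ)*x)
            - (η^3*Real.cos α) * (Real.cos ((n:ℝ)*x) / (1 + e*Real.cos x)^2)
            + (η^3*Real.sin α) * (Real.sin ((n:ℝ)*x) / (1 + e*Real.cos x)^2))
          (Set.uIcc 0 (2*π)) := by
        intro x _
        have hd := eoc_den_pos he0 he1 x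
        simp only
        rw [Real.cos_add]
        field_simp
        ring
      have hcc : Continuous (fun x : ℝ => Real.cos ((n:ℝ)*x)) :=
        Real.continuous_cos.comp (continuous_const.mul continuous_id)
      have hcs : Continuous (fun x : ℝ => Real.sin ((n:ℝ)*x)) :=
        Real.continuous_sin.comp (continuous_const.mul continuous_id)
      rw [intervalIntegral.integral_congr hpt,
        intervalIntegral.integral_add
          ((((continuous_const.fun_mul hcc).fun_sub (continuous_const.fun_mul hcs)).fun_sub
            (continuous_const.fun_mul (eoc_cont2 he0 he1 hcc))).intervalIntegrable _ _)
          ((continuous_const.fun_mul (eoc_cont2 he0 he1 hcs)).intervalIntegrable _ _),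
        intervalIntegral.integral_sub
          (((continuous_const.fun_mul hcc).fun_sub (continuous_const.fun_mul hcs)).intervalIntegrable _ _)
          ((continuous_const.fun_mul (eoc_cont2 he0 he1 hcc)).intervalIntegrable _ _),
        intervalIntegral.integral_sub
          ((continuous_const.fun_mul hcc).intervalIntegrable _ _)
          ((continuous_const.fun_mul hcs).intervalIntegrable _ _),
        intervalIntegral.integral_const_mul, intervalIntegral.integral_const_mul,
        intervalIntegral.integral_const_mul, intervalIntegral.integral_const_mul,
        eoc_integral_cos_kf n hn1, eoc_integral_sin_kf n,
        (eoc_fourier he0' he1 hη n).2.1, (eoc_fourier he0' he1 hη n).2.2]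
      field_simp
      ring
    -- the main integrand equals φ * sin
    have hptm : Set.EqOn (fun f => (f - ℓ f) * Real.sin ((n:ℝ) * f + α))
        (fun f => φ f * Real.sin ((n:ℝ)*f + α)) (Set.uIcc 0 (2*π)) := by
      intro x _
      simp only [hℓ x, hφ]
      ring
    rw [intervalIntegral.integral_congr hptm]
    have hdiv : ∫ x in (0:ℝ)..(2*π),
        (1 - η^3/(1 + e*Real.cos x)^2) * Real.cos ((n:ℝ)*x + α) / (n:ℝ)
        = (-2*π*(-e/(1+η))^n*(1+(n:ℝ)*η)*Real.cos α) / (n:ℝ) := by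
      rw [intervalIntegral.integral_div, hC]
    rw [hdiv] at hFTC
    have hmain : ∫ x in (0:ℝ)..(2*π), φ x * Real.sin ((n:ℝ)*x + α)
        = (-2*π*(-e/(1+η))^n*(1+(n:ℝ)*η)*Real.cos α) / (n:ℝ) := by linarith
    rw [hmain]
    have hπ : (0:ℝ) < π := Real.pi_pos
    field_simp
end

section
/- (Choice of the first-order integration constant cancels the long-period second-order term.) Let μ > 0, R > 0, L > 0, 0 < G ≤ L, and s ∈ ℝ with 5s² − 4 ≠ 0. Set η = G/L, e = √(1 − η²), p = G²/μ, H₀₀ = −μ²/(2L²), and define C₁(g) = G·(R²/p²)·( (15s² − 14)·s²·e² / (32·(5s² − 4)) )·sin 2g. Then for every g ∈ ℝ: −H₀₀·(R²/p²)·3·(5s² − 4)·(1/L)·C₁′(g) + H₀₀·(R⁴/p⁴)·(3/16)·η·(15s² − 14)·s²·e²·cos 2g = 0. -/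
open Real

/-- (Choice of the first-order integration constant cancels the
long-period second-order term.) -/
theorem first_order_constant_cancels_long_period
    (μ R L G s : ℝ)
    (hμ : 0 < μ) (hR : 0 < R) (hL : 0 < L) (hG0 : 0 < G) (hGL : G ≤ L)
    (hs : 5 * s ^ 2 - 4 ≠ 0)
    (η e p H00 : ℝ)
    (hη : η = G / L)
    (he : e = Real.sqrt (1 - η ^ 2))
    (hp : p = G ^ 2 / μ)
    (hH00 : H00 = -μ ^ 2 / (2 * L ^ 2))
    (C₁ : ℝ → ℝ)
    (hC₁ : ∀ g : ℝ, C₁ g =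
      G * (R ^ 2 / p ^ 2) *
        ((15 * s ^ 2 - 14) * s ^ 2 * e ^ 2 / (32 * (5 * s ^ 2 - 4))) *
        Real.sin (2 * g)) :
    ∀ g : ℝ,
      -H00 * (R ^ 2 / p ^ 2) * 3 * (5 * s ^ 2 - 4) * (1 / L) * deriv C₁ g +
        H00 * (R ^ 4 / p ^ 4) * (3 / 16) * η * (15 * s ^ 2 - 14) * s ^ 2 * e ^ 2 *
          Real.cos (2 * g)
      = 0 := by
  intro g
  have hp0 : p ≠ 0 := by
    rw [hp]; positivity
  have hK : deriv C₁ g =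
      G * (R ^ 2 / p ^ 2) *
        ((15 * s ^ 2 - 14) * s ^ 2 * e ^ 2 / (32 * (5 * s ^ 2 - 4))) *
        (2 * Real.cos (2 * g)) := by
    have h1 : C₁ = fun g : ℝ => G * (R ^ 2 / p ^ 2) *
        ((15 * s ^ 2 - 14) * s ^ 2 * e ^ 2 / (32 * (5 * s ^ 2 - 4))) *
        Real.sin (2 * g) := funext hC₁
    rw [h1]
    have hd : HasDerivAt (fun g : ℝ => Real.sin (2 * g)) (Real.cos (2 * g) * 2) g := by
      exact ((Real.hasDerivAt_sin (2 * g)).comp g ((hasDerivAt_id g).const_mul 2)).congr_deriv (by simp)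
    have := (hd.const_mul (G * (R ^ 2 / p ^ 2) *
        ((15 * s ^ 2 - 14) * s ^ 2 * e ^ 2 / (32 * (5 * s ^ 2 - 4))))).deriv
    rw [this]; ring
  rw [hK, hη]
  field_simp
  ring
end

section
/- (Choice of the second-order integration constant cancels the long-period third-order terms.) Let μ > 0, R > 0, L > 0, 0 < G ≤ L, and s ∈ ℝ with 5s² − 4 ≠ 0. Set η = G/L, e = √(1 − η²), p = G²/μ, H₀₀ = −μ²/(2L²), and define the inclination polynomials β₁,₀ = 525s⁶ − 3930s⁴ + 5632s² − 2256, β₁,₁ = 5925s⁶ − 16170s⁴ + 14848s² − 4560, β₁,₂ = (14 − 15s²)(75s⁴ − 212s² + 120), β₁,₃ = (15s² − 14)(45s⁴ + 36s² − 56), β₂,₀ = (15s² − 14)²(15s² − 13). Define C₂(g) = G·(R⁴/p⁴)·(1/256)·[ ( s²·e²·(β₁,₀ + β₁,₁·η + β₁,₂·η² + β₁,₃·η³) / ( 2·(5s² − 4)²·(1 + η) ) )·sin 2g + ( s⁴·e⁴·β₂,₀ / ( 4·(5s² − 4)³ ) )·sin 4g ]. Then for every g ∈ ℝ: −H₀₀·(R²/p²)·(9/2)·(5s²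 − 4)·(1/L)·C₂′(g) + H₀₀·(R⁶/p⁶)·(9/512)·η·[ ( s²·e²·(β₁,₀ + β₁,₁·η + β₁,₂·η² + β₁,₃·η³) / ( (5s² − 4)·(1 + η) ) )·cos 2g + ( s⁴·e⁴·β₂,₀ / (5s² − 4)² )·cos 4g ] = 0. -/
open Real

/-- (Choice of the second-order integration constant cancels the
long-period third-order terms.) -/
theorem second_order_constant_cancels_long_period
    (μ R L G s : ℝ)
    (hμ : 0 < μ) (hR : 0 < R) (hL : 0 < L) (hG0 : 0 < G) (hGL : G ≤ L)
    (hs : 5 * s ^ 2 - 4 ≠ 0)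
    (η e p H00 : ℝ)
    (hη : η = G / L)
    (he : e = Real.sqrt (1 - η ^ 2))
    (hp : p = G ^ 2 / μ)
    (hH00 : H00 = -μ ^ 2 / (2 * L ^ 2))
    (β₁₀ β₁₁ β₁₂ β₁₃ β₂₀ : ℝ)
    (hβ₁₀ : β₁₀ = 525 * s ^ 6 - 3930 * s ^ 4 + 5632 * s ^ 2 - 2256)
    (hβ₁₁ : β₁₁ = 5925 * s ^ 6 - 16170 * s ^ 4 + 14848 * s ^ 2 - 4560)
    (hβ₁₂ : β₁₂ = (14 - 15 * s ^ 2) * (75 * s ^ 4 - 212 * s ^ 2 + 120))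
    (hβ₁₃ : β₁₃ = (15 * s ^ 2 - 14) * (45 * s ^ 4 + 36 * s ^ 2 - 56))
    (hβ₂₀ : β₂₀ = (15 * s ^ 2 - 14) ^ 2 * (15 * s ^ 2 - 13))
    (C₂ : ℝ → ℝ)
    (hC₂ : ∀ g : ℝ, C₂ g =
      G * (R ^ 4 / p ^ 4) * (1 / 256) *
        ((s ^ 2 * e ^ 2 * (β₁₀ + β₁₁ * η + β₁₂ * η ^ 2 + β₁₃ * η ^ 3) /
            (2 * (5 * s ^ 2 - 4) ^ 2 * (1 + η))) * Real.sin (2 * g) +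
          (s ^ 4 * e ^ 4 * β₂₀ / (4 * (5 * s ^ 2 - 4) ^ 3)) * Real.sin (4 * g))) :
    ∀ g : ℝ,
      -H00 * (R ^ 2 / p ^ 2) * (9 / 2) * (5 * s ^ 2 - 4) * (1 / L) * deriv C₂ g +
        H00 * (R ^ 6 / p ^ 6) * (9 / 512) * η *
          ((s ^ 2 * e ^ 2 * (β₁₀ + β₁₁ * η + β₁₂ * η ^ 2 + β₁₃ * η ^ 3) /
              ((5 * s ^ 2 - 4) * (1 + η))) * Real.cos (2 * g) +
            (s ^ 4 * e ^ 4 * β₂₀ / (5 * s ^ 2 - 4) ^ 2) * Real.cos (4 * g))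
      = 0 := by
  intro g
  set a : ℝ := G * (R ^ 4 / p ^ 4) * (1 / 256) *
      (s ^ 2 * e ^ 2 * (β₁₀ + β₁₁ * η + β₁₂ * η ^ 2 + β₁₃ * η ^ 3) /
        (2 * (5 * s ^ 2 - 4) ^ 2 * (1 + η))) with ha
  set b : ℝ := G * (R ^ 4 / p ^ 4) * (1 / 256) *
      (s ^ 4 * e ^ 4 * β₂₀ / (4 * (5 * s ^ 2 - 4) ^ 3)) with hb
  have hCfun : C₂ = fun g => a * Real.sin (2 * g) + b * Real.sin (4 * g) := by
    funext x
    rw [hC₂ x, ha, hb]; ring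
  have hderiv : deriv C₂ g = a * (Real.cos (2 * g) * 2) + b * (Real.cos (4 * g) * 4) := by
    rw [hCfun]
    have h2 : HasDerivAt (fun x : ℝ => Real.sin (2 * x)) (Real.cos (2 * g) * 2) g := by
      simpa [Function.comp_def] using (Real.hasDerivAt_sin (2 * g)).comp g ((hasDerivAt_id g).const_mul 2)
    have h4 : HasDerivAt (fun x : ℝ => Real.sin (4 * x)) (Real.cos (4 * g) * 4) g := by
      simpa [Function.comp_def] using (Real.hasDerivAt_sin (4 * g)).comp g ((hasDerivAt_id g).const_mul 4)
    exact ((h2.const_mul a).add (h4.const_mul b)).deriv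
  rw [hderiv, ha, hb]
  have hη1 : (1 : ℝ) + η ≠ 0 := by
    have : 0 < η := by rw [hη]; positivity
    linarith
  have hLne : L ≠ 0 := ne_of_gt hL
  have hpne : p ≠ 0 := by rw [hp]; positivity
  have hGL2 : G = η * L := by rw [hη]; field_simp
  rw [hGL2]
  field_simp
  ring
end

section
/- (Closed-form second-order average, Eqs. (7) and (9) of the paper.) Let 0 ≤ e < 1, η = √(1−e²), g ∈ ℝ, s ∈ ℝ, and let ℓ_e(f) = f − 2·arctan( e·sin f / (1 + η + e·cos f) ) − e·η·sin f / (1 + e·cos f). Define P(f) = P₁(f) + P₂(f) + P₃(f), where P₁(f) = (3/64)·(η²/(1+η))·( (1 + e·cos f)²/η⁴ )·S₁(f) with S₁(f) = Σ B_{i,j,k}·s^{2i}·η^k·e^{|j−2i|}·cos(j·f + 2·i·g), the sum running over exactly the following coefficients: for i = 0: B_{0,0,0} = B_{0,0,1} = 10(7s⁴−16s²+8), B_{0,0,2} = B_{0,0,3} = 2(5s⁴+8s²−8), B_{0,1,0} = 2(57s⁴−124s²+60), B_{0,1,1} = 4(15s⁴−44s²+24), B_{0,1,2} = 2(3s²−2)²,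 B_{0,2,0} = 2(31s⁴−56s²+24), B_{0,2,1} = −2(5s⁴+8s²−8), B_{0,3,0} = 2(3s²−2)²; for i = 1: B_{1,−1,0} = 2−3s², B_{1,0,0} = B_{1,0,1} = 4(15s²−14), B_{1,1,0} = 3(37s²−38), B_{1,1,1} = 12(7s²−8), B_{1,1,2} = −5(3s²−2), B_{1,2,0} = B_{1,2,1} = −16(4s²−1), B_{1,2,2} = B_{1,2,3} = −8(s²−2), B_{1,3,0} = 150−221s², B_{1,3,1} = −4(35s²−24), B_{1,3,2} = 2−3s², B_{1,4,0} = −4(31s²−22), B_{1,4,1} = −4(13s²−10), B_{1,5,0} = −5(3s²−2); for i = 2: B_{2,2,0} = B_{2,2,1} = 5, B_{2,3,0} = B_{2,3,1} = 6, B_{2,4,0} = B_{2,4,1} = −6, B_{2,4,2} = B_{2,4,3} = −2, B_{2,5,0} = B_{2,5,1} = −10, B_{2,6,0} = B_{2,6,1} = −3; P₂(f) = (3/8)·η·[ η·(3s²−2)² + 3·(5s²−4)·s²·( e·cos(f+2g) + cos(2f+2g) + (e/3)·cos(3f+2g) ) ]; and P₃(f) = (9/8)·(5s²−4)·s²·(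 (1 + e·cos f)²/η² )·( f − ℓ_e(f) )·( e·sin(f+2g) + 2·sin(2f+2g) + e·sin(3f+2g) ). Then (1/(2π)) · ∫₀^{2π} P(f) · η³/(1 + e·cos f)² df = (3/32)·η·[ 5·(7s⁴−16s²+8) + η·(6s²−4)² + η²·(5s⁴+8s²−8) ] + (3/16)·η·(15s²−14)·s²·e²·cos 2g. -/
open Real
set_option maxHeartbeats 4000000

section Aux

private lemma sin_shift (k : ℤ) (a x : ℝ) (h : x = a + k * (2 * Real.pi)) :
    Real.sin x = Real.sin a := by
  rw [h]; exact_mod_cast Real.sin_add_int_mul_two_pi a k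

private lemma hderiv_sin (k a x : ℝ) :
    HasDerivAt (fun y : ℝ => Real.sin (k * y + a)) (Real.cos (k * x + a) * (k * 1)) x :=
  (((hasDerivAt_id x).const_mul k).add_const a).sin

private lemma hderiv_sin1 (a x : ℝ) :
    HasDerivAt (fun y : ℝ => Real.sin (y + a)) (Real.cos (x + a) * 1) x :=
  ((hasDerivAt_id x).add_const a).sin

private lemma hderiv_cos (k a x : ℝ) :
    HasDerivAt (fun y : ℝ => Real.cos (k * y + a)) (-Real.sin (k * x + a) * (k * 1)) x :=
  (((hasDerivAt_id x).const_mul k).add_const a).cos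

private lemma hderiv_cos1 (a x : ℝ) :
    HasDerivAt (fun y : ℝ => Real.cos (y + a)) (-Real.sin (x + a) * 1) x :=
  ((hasDerivAt_id x).add_const a).cos

private lemma hderiv_sin_neg (a x : ℝ) :
    HasDerivAt (fun y : ℝ => Real.sin (-y + a)) (Real.cos (-x + a) * (-1)) x :=
  (((hasDerivAt_id x).neg).add_const a).sin

end Aux

noncomputable def Cfun (e g : ℝ) : ℝ → ℝ := fun x =>
  e * Real.cos (x + 2*g) + Real.cos (2*x + 2*g) + e/3 * Real.cos (3*x + 2*g)

noncomputable def Dfun (e g : ℝ) : ℝ → ℝ := fun x =>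
  e * Real.sin (x + 2*g) + Real.sin (2*x + 2*g)/2 + e/9 * Real.sin (3*x + 2*g)

noncomputable def Tfun (e η g s : ℝ) : ℝ → ℝ := fun x =>
  (10*(7*s^4-16*s^2+8)*(1+η) + 2*(5*s^4+8*s^2-8)*(η^2+η^3)) * x
  + ((2*(57*s^4-124*s^2+60) + 4*(15*s^4-44*s^2+24)*η + 2*(3*s^2-2)^2*η^2)*e) * Real.sin x
  + ((2*(31*s^4-56*s^2+24) - 2*(5*s^4+8*s^2-8)*η)*e^2) * (Real.sin (2*x)/2)
  + (2*(3*s^2-2)^2*e^3) * (Real.sin (3*x)/3)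
  + ((2-3*s^2)*s^2*e^3) * (-Real.sin (-x + 2*g))
  + (4*(15*s^2-14)*s^2*e^2*(1+η)) * (Real.cos (2*g) * x)
  + ((3*(37*s^2-38) + 12*(7*s^2-8)*η - 5*(3*s^2-2)*η^2)*s^2*e) * Real.sin (x+2*g)
  + ((-16*(4*s^2-1)*(1+η) - 8*(s^2-2)*(η^2+η^3))*s^2) * (Real.sin (2*x+2*g)/2)
  + ((150-221*s^2 - 4*(35*s^2-24)*η + (2-3*s^2)*η^2)*s^2*e) * (Real.sin (3*x+2*g)/3)
  + ((-4*(31*s^2-22) - 4*(13*s^2-10)*η)*s^2*e^2) * (Real.sin (4*x+2*g)/4)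
  + (-5*(3*s^2-2)*s^2*e^3) * (Real.sin (5*x+2*g)/5)
  + (5*(1+η)*s^4*e^2) * (Real.sin (2*x+4*g)/2)
  + (6*(1+η)*s^4*e) * (Real.sin (3*x+4*g)/3)
  + ((-6*(1+η) - 2*(η^2+η^3))*s^4) * (Real.sin (4*x+4*g)/4)
  + (-10*(1+η)*s^4*e) * (Real.sin (5*x+4*g)/5)
  + (-3*(1+η)*s^4*e^2) * (Real.sin (6*x+4*g)/6)

noncomputable def Ffun (e η g s : ℝ) (ℓ : ℝ → ℝ) : ℝ → ℝ := fun x =>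
  3/64*(η/(1+η)) * Tfun e η g s x
  + 3/8*η^2*(3*s^2-2)^2 * ℓ x
  + 9/8*(5*s^2-4)*s^2*η * (Dfun e g x - (x - ℓ x) * Cfun e g x)

lemma ell_deriv (e η : ℝ) (he0 : 0 ≤ e) (he1 : e < 1)
    (hη : η = Real.sqrt (1 - e ^ 2)) (x : ℝ) :
    HasDerivAt (fun f : ℝ => f - 2 * Real.arctan (e * Real.sin f / (1 + η + e * Real.cos f))
      - e * η * Real.sin f / (1 + e * Real.cos f)) (η ^ 3 / (1 + e * Real.cos x) ^ 2) x := by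
  have h1e : (0:ℝ) < 1 - e ^ 2 := by nlinarith
  have hη0 : 0 < η := hη ▸ Real.sqrt_pos.mpr h1e
  have hη2 : η ^ 2 = 1 - e ^ 2 := by rw [hη, Real.sq_sqrt h1e.le]
  have hd2 : 0 < 1 + e * Real.cos x := by nlinarith [Real.neg_one_le_cos x, Real.cos_le_one x]
  have hd1 : 0 < 1 + η + e * Real.cos x := by linarith
  have hpyth : Real.sin x ^ 2 = 1 - Real.cos x ^ 2 := by
    nlinarith [Real.sin_sq_add_cos_sq x]
  have hu : HasDerivAt (fun f : ℝ => e * Real.sin f / (1 + η + e * Real.cos f))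
      ((e * Real.cos x * (1 + η + e * Real.cos x) - e * Real.sin x * (e * -Real.sin x))
        / (1 + η + e * Real.cos x) ^ 2) x :=
    ((Real.hasDerivAt_sin x).const_mul e).div
      (((Real.hasDerivAt_cos x).const_mul e).const_add (1 + η)) hd1.ne'
  have ha : HasDerivAt (fun f : ℝ => Real.arctan (e * Real.sin f / (1 + η + e * Real.cos f)))
      ((1 / (1 + (e * Real.sin x / (1 + η + e * Real.cos x)) ^ 2)) *
        ((e * Real.cos x * (1 + η + e * Real.cos x) - e * Real.sin x * (e * -Real.sin x))
          / (1 + η + e * Real.cos x) ^ 2)) x :=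
    (Real.hasDerivAt_arctan _).comp x hu
  have hv : HasDerivAt (fun f : ℝ => e * η * Real.sin f / (1 + e * Real.cos f))
      ((e * η * Real.cos x * (1 + e * Real.cos x) - e * η * Real.sin x * (e * -Real.sin x))
        / (1 + e * Real.cos x) ^ 2) x :=
    ((Real.hasDerivAt_sin x).const_mul (e * η)).div
      (((Real.hasDerivAt_cos x).const_mul e).const_add 1) hd2.ne'
  have hraw := ((hasDerivAt_id x).sub (ha.const_mul 2)).sub hv
  refine HasDerivAt.congr_deriv hraw ?_
  have hden2 : 1 + (e * Real.sin x / (1 + η + e * Real.cos x)) ^ 2 =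
      2 * (1 + η) * (1 + e * Real.cos x) / (1 + η + e * Real.cos x) ^ 2 := by
    field_simp
    linear_combination e ^ 2 * hpyth + hη2
  have hnum : e * Real.cos x * (1 + η + e * Real.cos x) - e * Real.sin x * (e * -Real.sin x) =
      (1 + η) * ((1 + e * Real.cos x) - η) := by
    linear_combination e^2 * hpyth + hη2
  have key : (1 / (1 + (e * Real.sin x / (1 + η + e * Real.cos x)) ^ 2)) *
      ((e * Real.cos x * (1 + η + e * Real.cos x) - e * Real.sin x * (e * -Real.sin x))
        / (1 + η + e * Real.cos x) ^ 2) = (1 - η / (1 + e * Real.cos x)) / 2 := by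
    rw [hden2, hnum]
    field_simp
  have keyv : (e * η * Real.cos x * (1 + e * Real.cos x) - e * η * Real.sin x * (e * -Real.sin x))
      / (1 + e * Real.cos x) ^ 2 = e * η * (Real.cos x + e) / (1 + e * Real.cos x) ^ 2 := by
    rw [div_eq_div_iff (by positivity) (by positivity)]
    linear_combination (1 + e * Real.cos x) ^ 2 * e ^ 2 * η * hpyth
  rw [key, keyv]
  field_simp
  linear_combination (-η) * hη2

private lemma hderiv_sin0 (k x : ℝ) :
    HasDerivAt (fun y : ℝ => Real.sin (k * y)) (Real.cos (k * x) * (k * 1)) x :=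
  ((hasDerivAt_id x).const_mul k).sin

/-- (Closed-form second-order average, Eqs. (7) and (9) of the paper.)
The mean-anomaly average of the known second-order term `H̃′₀,₂/(H₀₀R⁴/p⁴)` of the
Lie-transforms normalization of the main problem reproduces Brouwer's second-order
Hamiltonian after the elimination of short-period terms. -/
theorem second_order_average_closed_form
    (e η g s : ℝ) (he0 : 0 ≤ e) (he1 : e < 1)
    (hη : η = Real.sqrt (1 - e ^ 2))
    (ℓ : ℝ → ℝ)
    (hℓ : ∀ f : ℝ, ℓ f =
      f - 2 * Real.arctan (e * Real.sin f / (1 + η + e * Real.cos f))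
        - e * η * Real.sin f / (1 + e * Real.cos f))
    (S₁ P₁ P₂ P₃ P : ℝ → ℝ)
    (hS₁ : ∀ f : ℝ, S₁ f =
      -- i = 0 terms
      (10 * (7 * s ^ 4 - 16 * s ^ 2 + 8)) * Real.cos (0 * f + 0 * g) +
      (10 * (7 * s ^ 4 - 16 * s ^ 2 + 8)) * η * Real.cos (0 * f + 0 * g) +
      (2 * (5 * s ^ 4 + 8 * s ^ 2 - 8)) * η ^ 2 * Real.cos (0 * f + 0 * g) +
      (2 * (5 * s ^ 4 + 8 * s ^ 2 - 8)) * η ^ 3 * Real.cos (0 * f + 0 * g) +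
      (2 * (57 * s ^ 4 - 124 * s ^ 2 + 60)) * e * Real.cos (1 * f + 0 * g) +
      (4 * (15 * s ^ 4 - 44 * s ^ 2 + 24)) * η * e * Real.cos (1 * f + 0 * g) +
      (2 * (3 * s ^ 2 - 2) ^ 2) * η ^ 2 * e * Real.cos (1 * f + 0 * g) +
      (2 * (31 * s ^ 4 - 56 * s ^ 2 + 24)) * e ^ 2 * Real.cos (2 * f + 0 * g) +
      (-2 * (5 * s ^ 4 + 8 * s ^ 2 - 8)) * η * e ^ 2 * Real.cos (2 * f + 0 * g) +
      (2 * (3 * s ^ 2 - 2) ^ 2) * e ^ 3 * Real.cos (3 * f + 0 * g) +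
      -- i = 1 terms
      (2 - 3 * s ^ 2) * s ^ 2 * e ^ 3 * Real.cos (-1 * f + 2 * g) +
      (4 * (15 * s ^ 2 - 14)) * s ^ 2 * e ^ 2 * Real.cos (0 * f + 2 * g) +
      (4 * (15 * s ^ 2 - 14)) * s ^ 2 * η * e ^ 2 * Real.cos (0 * f + 2 * g) +
      (3 * (37 * s ^ 2 - 38)) * s ^ 2 * e * Real.cos (1 * f + 2 * g) +
      (12 * (7 * s ^ 2 - 8)) * s ^ 2 * η * e * Real.cos (1 * f + 2 * g) +
      (-5 * (3 * s ^ 2 - 2)) * s ^ 2 * η ^ 2 * e * Real.cos (1 * f + 2 * g) +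
      (-16 * (4 * s ^ 2 - 1)) * s ^ 2 * Real.cos (2 * f + 2 * g) +
      (-16 * (4 * s ^ 2 - 1)) * s ^ 2 * η * Real.cos (2 * f + 2 * g) +
      (-8 * (s ^ 2 - 2)) * s ^ 2 * η ^ 2 * Real.cos (2 * f + 2 * g) +
      (-8 * (s ^ 2 - 2)) * s ^ 2 * η ^ 3 * Real.cos (2 * f + 2 * g) +
      (150 - 221 * s ^ 2) * s ^ 2 * e * Real.cos (3 * f + 2 * g) +
      (-4 * (35 * s ^ 2 - 24)) * s ^ 2 * η * e * Real.cos (3 * f + 2 * g) +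
      (2 - 3 * s ^ 2) * s ^ 2 * η ^ 2 * e * Real.cos (3 * f + 2 * g) +
      (-4 * (31 * s ^ 2 - 22)) * s ^ 2 * e ^ 2 * Real.cos (4 * f + 2 * g) +
      (-4 * (13 * s ^ 2 - 10)) * s ^ 2 * η * e ^ 2 * Real.cos (4 * f + 2 * g) +
      (-5 * (3 * s ^ 2 - 2)) * s ^ 2 * e ^ 3 * Real.cos (5 * f + 2 * g) +
      -- i = 2 terms
      5 * s ^ 4 * e ^ 2 * Real.cos (2 * f + 4 * g) +
      5 * s ^ 4 * η * e ^ 2 * Real.cos (2 * f + 4 * g) +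
      6 * s ^ 4 * e * Real.cos (3 * f + 4 * g) +
      6 * s ^ 4 * η * e * Real.cos (3 * f + 4 * g) +
      (-6) * s ^ 4 * Real.cos (4 * f + 4 * g) +
      (-6) * s ^ 4 * η * Real.cos (4 * f + 4 * g) +
      (-2) * s ^ 4 * η ^ 2 * Real.cos (4 * f + 4 * g) +
      (-2) * s ^ 4 * η ^ 3 * Real.cos (4 * f + 4 * g) +
      (-10) * s ^ 4 * e * Real.cos (5 * f + 4 * g) +
      (-10) * s ^ 4 * η * e * Real.cos (5 * f + 4 * g) +
      (-3) * s ^ 4 * e ^ 2 * Real.cos (6 * f + 4 * g) +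
      (-3) * s ^ 4 * η * e ^ 2 * Real.cos (6 * f + 4 * g))
    (hP₁ : ∀ f : ℝ, P₁ f =
      3 / 64 * (η ^ 2 / (1 + η)) * ((1 + e * Real.cos f) ^ 2 / η ^ 4) * S₁ f)
    (hP₂ : ∀ f : ℝ, P₂ f =
      3 / 8 * η *
        (η * (3 * s ^ 2 - 2) ^ 2 +
          3 * (5 * s ^ 2 - 4) * s ^ 2 *
            (e * Real.cos (f + 2 * g) + Real.cos (2 * f + 2 * g) +
              e / 3 * Real.cos (3 * f + 2 * g))))
    (hP₃ : ∀ f : ℝ, P₃ f =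
      9 / 8 * (5 * s ^ 2 - 4) * s ^ 2 * ((1 + e * Real.cos f) ^ 2 / η ^ 2) *
        (f - ℓ f) *
        (e * Real.sin (f + 2 * g) + 2 * Real.sin (2 * f + 2 * g) +
          e * Real.sin (3 * f + 2 * g)))
    (hP : ∀ f : ℝ, P f = P₁ f + P₂ f + P₃ f) :
    (1 / (2 * Real.pi)) *
      ∫ f in (0 : ℝ)..(2 * Real.pi), P f * (η ^ 3 / (1 + e * Real.cos f) ^ 2)
    = 3 / 32 * η *
        (5 * (7 * s ^ 4 - 16 * s ^ 2 + 8) + η * (6 * s ^ 2 - 4) ^ 2 +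
          η ^ 2 * (5 * s ^ 4 + 8 * s ^ 2 - 8)) +
      3 / 16 * η * (15 * s ^ 2 - 14) * s ^ 2 * e ^ 2 * Real.cos (2 * g) := by
  have h1e : (0:ℝ) < 1 - e ^ 2 := by nlinarith
  have hη0 : 0 < η := hη ▸ Real.sqrt_pos.mpr h1e
  have h1η : (1:ℝ) + η ≠ 0 := by positivity
  have hd2 : ∀ x : ℝ, 0 < 1 + e * Real.cos x := fun x => by
    nlinarith [Real.neg_one_le_cos x, Real.cos_le_one x]
  have hld : ∀ x : ℝ, HasDerivAt ℓ (η ^ 3 / (1 + e * Real.cos x) ^ 2) x := fun x =>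
    (ell_deriv e η he0 he1 hη x).congr_of_eventuallyEq
      (Filter.Eventually.of_forall fun y => hℓ y)
  have hℓcont : Continuous ℓ :=
    continuous_iff_continuousAt.mpr fun x => (hld x).differentiableAt.continuousAt
  have hFd : ∀ x : ℝ, HasDerivAt (Ffun e η g s ℓ)
      (P x * (η ^ 3 / (1 + e * Real.cos x) ^ 2)) x := by
    intro x
    have hC : HasDerivAt (Cfun e g) (e * (-Real.sin (x+2*g) * 1) + -Real.sin (2*x+2*g) * (2*1)
        + e/3 * (-Real.sin (3*x+2*g) * (3*1))) x :=
      (((hderiv_cos1 (2*g) x).const_mul e).add (hderiv_cos 2 (2*g) x)).add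
        ((hderiv_cos 3 (2*g) x).const_mul (e/3))
    have hD : HasDerivAt (Dfun e g) (e * (Real.cos (x+2*g) * 1) + (Real.cos (2*x+2*g) * (2*1))/2
        + e/9 * (Real.cos (3*x+2*g) * (3*1))) x :=
      (((hderiv_sin1 (2*g) x).const_mul e).add ((hderiv_sin 2 (2*g) x).div_const 2)).add
        ((hderiv_sin 3 (2*g) x).const_mul (e/9))
    have hT : HasDerivAt (Tfun e η g s) _ x :=
      (((((((((((((((((hasDerivAt_id x).const_mul
        (10*(7*s^4-16*s^2+8)*(1+η) + 2*(5*s^4+8*s^2-8)*(η^2+η^3))).add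
      ((Real.hasDerivAt_sin x).const_mul
        ((2*(57*s^4-124*s^2+60) + 4*(15*s^4-44*s^2+24)*η + 2*(3*s^2-2)^2*η^2)*e))).add
      (((hderiv_sin0 2 x).div_const 2).const_mul
        ((2*(31*s^4-56*s^2+24) - 2*(5*s^4+8*s^2-8)*η)*e^2))).add
      (((hderiv_sin0 3 x).div_const 3).const_mul (2*(3*s^2-2)^2*e^3))).add
      (((hderiv_sin_neg (2*g) x).neg).const_mul ((2-3*s^2)*s^2*e^3))).add
      (((hasDerivAt_id x).const_mul (Real.cos (2*g))).const_mul
        (4*(15*s^2-14)*s^2*e^2*(1+η)))).add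
      ((hderiv_sin1 (2*g) x).const_mul
        ((3*(37*s^2-38) + 12*(7*s^2-8)*η - 5*(3*s^2-2)*η^2)*s^2*e))).add
      (((hderiv_sin 2 (2*g) x).div_const 2).const_mul
        ((-16*(4*s^2-1)*(1+η) - 8*(s^2-2)*(η^2+η^3))*s^2))).add
      (((hderiv_sin 3 (2*g) x).div_const 3).const_mul
        ((150-221*s^2 - 4*(35*s^2-24)*η + (2-3*s^2)*η^2)*s^2*e))).add
      (((hderiv_sin 4 (2*g) x).div_const 4).const_mul
        ((-4*(31*s^2-22) - 4*(13*s^2-10)*η)*s^2*e^2))).add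
      (((hderiv_sin 5 (2*g) x).div_const 5).const_mul (-5*(3*s^2-2)*s^2*e^3))).add
      (((hderiv_sin 2 (4*g) x).div_const 2).const_mul (5*(1+η)*s^4*e^2))).add
      (((hderiv_sin 3 (4*g) x).div_const 3).const_mul (6*(1+η)*s^4*e))).add
      (((hderiv_sin 4 (4*g) x).div_const 4).const_mul ((-6*(1+η) - 2*(η^2+η^3))*s^4))).add
      (((hderiv_sin 5 (4*g) x).div_const 5).const_mul (-10*(1+η)*s^4*e))).add
      (((hderiv_sin 6 (4*g) x).div_const 6).const_mul (-3*(1+η)*s^4*e^2)))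
    have hprod := ((hasDerivAt_id x).sub (hld x)).mul hC
    have hF := ((hT.const_mul (3/64*(η/(1+η)))).add
      ((hld x).const_mul (3/8*η^2*(3*s^2-2)^2))).add
      ((hD.sub hprod).const_mul (9/8*(5*s^2-4)*s^2*η))
    refine HasDerivAt.congr_deriv hF ?_
    rw [hP, hP₁, hP₂, hP₃, hS₁]
    simp only [Cfun, id_eq, Pi.sub_apply]
    simp only [zero_mul, one_mul, mul_one, add_zero, zero_add, neg_mul, Real.cos_zero]
    have hη' : η ≠ 0 := hη0.ne'
    have hd2' : (1 + e * Real.cos x) ≠ 0 := (hd2 x).ne'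
    field_simp
    set_option maxRecDepth 100000 in ring
  have hInt : IntervalIntegrable (fun x => P x * (η ^ 3 / (1 + e * Real.cos x) ^ 2))
      MeasureTheory.volume 0 (2*π) := by
    apply Continuous.intervalIntegrable
    simp only [hP, hP₁, hP₂, hP₃, hS₁]
    apply Continuous.mul
    · fun_prop
    · exact continuous_const.div (by fun_prop) (fun x => pow_ne_zero 2 (hd2 x).ne')
  rw [intervalIntegral.integral_eq_sub_of_hasDerivAt (fun x _ => hFd x) hInt]
  have ℓ0 : ℓ 0 = 0 := by rw [hℓ]; simp
  have ℓ2 : ℓ (2*π) = 2*π := by rw [hℓ]; simp [Real.sin_two_pi]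
  simp only [Ffun, Tfun, Cfun, Dfun, ℓ0, ℓ2]
  rw [Real.sin_two_pi,
    sin_shift 2 0 (2*(2*π)) (by push_cast; ring),
    sin_shift 3 0 (3*(2*π)) (by push_cast; ring),
    sin_shift (-1) (2*g) (-(2*π)+2*g) (by push_cast; ring),
    sin_shift 1 (2*g) (2*π+2*g) (by push_cast; ring),
    sin_shift 2 (2*g) (2*(2*π)+2*g) (by push_cast; ring),
    sin_shift 3 (2*g) (3*(2*π)+2*g) (by push_cast; ring),
    sin_shift 4 (2*g) (4*(2*π)+2*g) (by push_cast; ring),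
    sin_shift 5 (2*g) (5*(2*π)+2*g) (by push_cast; ring),
    sin_shift 2 (4*g) (2*(2*π)+4*g) (by push_cast; ring),
    sin_shift 3 (4*g) (3*(2*π)+4*g) (by push_cast; ring),
    sin_shift 4 (4*g) (4*(2*π)+4*g) (by push_cast; ring),
    sin_shift 5 (4*g) (5*(2*π)+4*g) (by push_cast; ring),
    sin_shift 6 (4*g) (6*(2*π)+4*g) (by push_cast; ring)]
  norm_num
  field_simp
  ring
end
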